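/- arXiv:1509.01977 — 3 statements merged into one kernel-verified Lean document; each statement's English description precedes it below -/
import Mathlib

section
/- For all a, b > 0 with a ≠ b, L/G < 1 + G/H - I/G, where G = √(ab), H = 2ab/(a+b), L = (a-b)/(log a - log b), and I = (1/e)·(a^a/b^b)^{1/(a-b)}. -/
open Real

open Nat


lemma hasSum_exp_real (x : ℝ) : HasSum (fun n => x ^ n / (n ! : ℝ)) (Real.exp x) := by
  rw [Real.exp_eq_exp_ℝ]
  exact NormedSpace.expSeries_div_hasSum_exp x

noncomputable def q1 (s : ℝ) (n : ℕ) : ℝ :=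
  ((3*s)^n - (-(3*s))^n - 3*s^n + 3*(-s)^n) / (n ! : ℝ)

noncomputable def q2 (s : ℝ) : ℕ → ℝ
  | 0 => 0
  | 1 => 0
  | (n+2) => (-2*((2*s)^n - (-(2*s))^n) - 8*(s^n - (-s)^n)) * s^2 / (n ! : ℝ)

noncomputable def q3 (s : ℝ) : ℕ → ℝ
  | 0 => 0
  | 1 => 0
  | 2 => 0
  | (n+3) => (4*(s^n + (-s)^n)) * s^3 / (n ! : ℝ)

noncomputable def q4 (s : ℝ) (n : ℕ) : ℝ := if n = 3 then 8*s^3 else 0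

lemma hq1 (s : ℝ) : HasSum (q1 s)
    (Real.exp (3*s) - Real.exp (-(3*s)) - 3*Real.exp s + 3*Real.exp (-s)) := by
  have H := (((hasSum_exp_real (3*s)).sub (hasSum_exp_real (-(3*s)))).sub
    (((hasSum_exp_real s).sub (hasSum_exp_real (-s))).mul_left 3))
  have hf : q1 s = fun n => (3*s)^n / (n ! : ℝ) - (-(3*s))^n / (n ! : ℝ) -
      3 * (s^n / (n ! : ℝ) - (-s)^n / (n ! : ℝ)) := by
    funext n; simp only [q1]; ring
  rw [hf]
  rw [show Real.exp (3*s) - Real.exp (-(3*s)) - 3*Real.exp s + 3*Real.exp (-s) =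
    Real.exp (3*s) - Real.exp (-(3*s)) - 3*(Real.exp s - Real.exp (-s)) by ring]
  exact H

lemma hq2 (s : ℝ) : HasSum (q2 s)
    (-2*s^2*(Real.exp (2*s) - Real.exp (-(2*s))) + -8*s^2*(Real.exp s - Real.exp (-s))) := by
  have H := ((((hasSum_exp_real (2*s)).sub (hasSum_exp_real (-(2*s)))).mul_left (-2*s^2)).add
    (((hasSum_exp_real s).sub (hasSum_exp_real (-s))).mul_left (-8*s^2)))
  have hf : (fun n => q2 s (n+2)) = fun n =>
      -2*s^2 * ((2*s)^n / (n ! : ℝ) - (-(2*s))^n / (n ! : ℝ)) +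
      -8*s^2 * (s^n / (n ! : ℝ) - (-s)^n / (n ! : ℝ)) := by
    funext n; show (-2*((2*s)^n - (-(2*s))^n) - 8*(s^n - (-s)^n)) * s^2 / (n ! : ℝ) = _; ring
  have H2 := (hasSum_nat_add_iff (f := q2 s) 2).mp (hf ▸ H)
  simpa [q2, Finset.sum_range_succ] using H2

lemma hq3 (s : ℝ) : HasSum (q3 s) (4*s^3*(Real.exp s + Real.exp (-s))) := by
  have H := (((hasSum_exp_real s).add (hasSum_exp_real (-s))).mul_left (4*s^3))
  have hf : (fun n => q3 s (n+3)) = fun n =>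
      4*s^3 * (s^n / (n ! : ℝ) + (-s)^n / (n ! : ℝ)) := by
    funext n; show (4*(s^n + (-s)^n)) * s^3 / (n ! : ℝ) = _; ring
  have H2 := (hasSum_nat_add_iff (f := q3 s) 3).mp (hf ▸ H)
  simpa [q3, Finset.sum_range_succ] using H2

lemma hq4 (s : ℝ) : HasSum (q4 s) (8*s^3) := hasSum_ite_eq 3 (8*s^3)

lemma hT (s : ℝ) : HasSum (fun n => q1 s n + q2 s n + q3 s n + q4 s n)
    ((Real.exp (3*s) - Real.exp (-(3*s)) - 3*Real.exp s + 3*Real.exp (-s)) +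
     (-2*s^2*(Real.exp (2*s) - Real.exp (-(2*s))) + -8*s^2*(Real.exp s - Real.exp (-s))) +
     4*s^3*(Real.exp s + Real.exp (-s)) + 8*s^3) :=
  (((hq1 s).add (hq2 s)).add (hq3 s)).add (hq4 s)

lemma nat_key (j : ℕ) : 6 + (2^(j+9)+16)*((j+9)*(j+8)) ≤ 2*3^(j+9) := by
  induction j with
  | zero => norm_num
  | succ n ih =>
      calc 6 + (2^(n+1+9)+16)*((n+1+9)*(n+1+8))
          ≤ (6 + (2^(n+9)+16)*((n+9)*(n+8)))*3 := by
            have : (6 + (2^(n+9)+16)*((n+9)*(n+8)))*3 =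
              6 + (2^(n+1+9)+16)*((n+1+9)*(n+1+8)) +
              (2^(n+9)*((n+4)*(n+9)) + (32*n+224)*(n+9) + 12) := by ring
            omega
        _ ≤ (2*3^(n+9))*3 := Nat.mul_le_mul_right 3 ih
        _ = 2*3^(n+1+9) := by ring

lemma term_nonneg (s : ℝ) (hs : 0 < s) (n : ℕ) :
    0 ≤ q1 s n + q2 s n + q3 s n + q4 s n := by
  rcases n with _ | _ | _ | _ | _ | m
  · norm_num [q1, q2, q3, q4]
  · norm_num [q1, q2, q3, q4, Nat.factorial]
  · show 0 ≤ q1 s 2 + q2 s (0+2) + q3 s 2 + q4 s 2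
    norm_num [q1, q2, q3, q4, Nat.factorial] <;> (try ring_nf) <;> (try norm_num)
  · show 0 ≤ q1 s 3 + q2 s (1+2) + q3 s (0+3) + q4 s 3
    norm_num [q1, q2, q3, q4, Nat.factorial] <;> (try ring_nf) <;> (try norm_num)
  · show 0 ≤ q1 s 4 + q2 s (2+2) + q3 s (1+3) + q4 s 4
    norm_num [q1, q2, q3, q4, Nat.factorial] <;> (try ring_nf) <;> (try norm_num)
  · obtain ⟨k, hk | hk⟩ := Nat.even_or_odd' m <;> subst hk
    · -- n = 2k+5, odd
      have e : 2*k+5 = (2*k+3)+2 := by ring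
      have e' : 2*k+5 = (2*k+2)+3 := by ring
      have o1 : Odd (2*k+5) := ⟨k+2, by ring⟩
      have o2 : Odd (2*k+3) := ⟨k+1, by ring⟩
      have ev : Even (2*k+2) := ⟨k+1, by ring⟩
      have h4 : q4 s (2*k+5) = 0 := by simp only [q4, if_neg (show ¬(2*k+5 = 3) by omega)]
      show 0 ≤ q1 s (2*k+5) + q2 s (2*k+5) + q3 s (2*k+5) + q4 s (2*k+5)
      rw [h4, e, e']
      show 0 ≤ q1 s ((2*k+3)+2) + ((-2*((2*s)^(2*k+3) - (-(2*s))^(2*k+3)) -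
          8*(s^(2*k+3) - (-s)^(2*k+3))) * s^2 / ((2*k+3)! : ℝ)) +
          ((4*(s^(2*k+2) + (-s)^(2*k+2))) * s^3 / ((2*k+2)! : ℝ)) + 0
      have e2 : (2*k+3)+2 = 2*k+5 := by ring
      rw [e2]
      simp only [q1]
      rw [o1.neg_pow, o1.neg_pow, o2.neg_pow, o2.neg_pow, ev.neg_pow, mul_pow, mul_pow]
      rcases k with _ | _ | k
      · norm_num [Nat.factorial] <;> (try ring_nf) <;> (try norm_num)
      · norm_num [Nat.factorial] <;> (try ring_nf) <;> (try norm_num)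
      · -- k ≥ 2 : exponent 2k+9
        have hfa : ∀ j : ℕ, (0:ℝ) < (j ! : ℝ) := fun j => by
          exact_mod_cast Nat.cast_pos.mpr j.factorial_pos
        have e5 : 2*(k+2)+5 = 2*k+9 := by ring
        have e3 : 2*(k+2)+3 = 2*k+7 := by ring
        have e2' : 2*(k+2)+2 = 2*k+6 := by ring
        rw [e5, e3, e2']
        have hfac9 : ((2*k+9)! : ℝ) = ((2*k+9)*((2*k+8)*(2*k+7))) * ((2*k+6)! : ℝ) := by
          have : (2*k+9)! = (2*k+9)*((2*k+8)*((2*k+7)*(2*k+6)!)) := by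
            rw [show 2*k+9 = (2*k+8)+1 from by ring, Nat.factorial_succ,
               show 2*k+8 = (2*k+7)+1 from by ring, Nat.factorial_succ,
               show 2*k+7 = (2*k+6)+1 from by ring, Nat.factorial_succ]
            try ring
          rw [this]; push_cast; ring
        have hfac7 : ((2*k+7)! : ℝ) = (2*k+7) * ((2*k+6)! : ℝ) := by
          have : (2*k+7)! = (2*k+7)*(2*k+6)! := by
            rw [show 2*k+7 = (2*k+6)+1 from by ring, Nat.factorial_succ]
          rw [this]; push_cast; ring
        have key : ((6:ℝ) + (2^(2*k+9)+16)*((2*k+9)*(2*k+8))) ≤ 2*3^(2*k+9) := by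
          exact_mod_cast nat_key (2*k)
        have h8 : (0:ℝ) ≤ 8*(((2*k:ℝ)+9)*(((2*k:ℝ)+8)*((2*k:ℝ)+7))) := by positivity
        have hnum : (0:ℝ) ≤ (2*3^(2*k+9) - 6 - (2^(2*k+9)+16)*(((2*k:ℝ)+9)*((2*k:ℝ)+8)) +
            8*(((2*k:ℝ)+9)*(((2*k:ℝ)+8)*((2*k:ℝ)+7)))) := by
          push_cast at key
          nlinarith [key, h8]
        have hB : (0:ℝ) < ((2*k+6)! : ℝ) := by
          exact_mod_cast Nat.cast_pos.mpr (2*k+6).factorial_pos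
        have goal_eq : (3 ^ (2*k+9) * s ^ (2*k+9) - -(3 ^ (2*k+9) * s ^ (2*k+9)) -
              3 * s ^ (2*k+9) + 3 * -s ^ (2*k+9)) / ((2*k+9)! : ℝ) +
            (-2 * (2 ^ (2*k+7) * s ^ (2*k+7) - -(2 ^ (2*k+7) * s ^ (2*k+7))) -
              8 * (s ^ (2*k+7) - -s ^ (2*k+7))) * s ^ 2 / ((2*k+7)! : ℝ) +
            4 * (s ^ (2*k+6) + s ^ (2*k+6)) * s ^ 3 / ((2*k+6)! : ℝ) + 0 =
            ((2 * 3 ^ (2*k+9) - 6 - (2 ^ (2*k+9) + 16) * ((2*(k:ℝ)+9) * (2*(k:ℝ)+8)) +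
              8 * ((2*(k:ℝ)+9) * ((2*(k:ℝ)+8) * (2*(k:ℝ)+7)))) * s ^ (2*k+9)) /
            (((2*(k:ℝ)+9) * ((2*(k:ℝ)+8) * (2*(k:ℝ)+7))) * ((2*k+6)! : ℝ)) := by
          rw [hfac9, hfac7]
          have hk9 : (0:ℝ) < 2*(k:ℝ)+9 := by positivity
          have hk8 : (0:ℝ) < 2*(k:ℝ)+8 := by positivity
          have hk7 : (0:ℝ) < 2*(k:ℝ)+7 := by positivity
          push_cast
          field_simp
          ring
        rw [goal_eq]
        apply div_nonneg
        · exact mul_nonneg hnum (le_of_lt (pow_pos hs _))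
        · positivity
    · -- n = 2k+6, even
      have h4 : q4 s (2*k+1+5) = 0 := by simp only [q4, if_neg (show ¬(2*k+1+5 = 3) by omega)]
      have e : 2*k+1+5 = (2*k+4)+2 := by ring
      have e' : 2*k+1+5 = (2*k+3)+3 := by ring
      have ev : Even (2*k+6) := ⟨k+3, by ring⟩
      have ev2 : Even (2*k+4) := ⟨k+2, by ring⟩
      have o3 : Odd (2*k+3) := ⟨k+1, by ring⟩
      show 0 ≤ q1 s (2*k+1+5) + q2 s (2*k+1+5) + q3 s (2*k+1+5) + q4 s (2*k+1+5)
      rw [h4, e, e']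
      show 0 ≤ q1 s ((2*k+4)+2) + ((-2*((2*s)^(2*k+4) - (-(2*s))^(2*k+4)) -
          8*(s^(2*k+4) - (-s)^(2*k+4))) * s^2 / ((2*k+4)! : ℝ)) +
          ((4*(s^(2*k+3) + (-s)^(2*k+3))) * s^3 / ((2*k+3)! : ℝ)) + 0
      have e2 : (2*k+4)+2 = 2*k+6 := by ring
      rw [e2]
      simp only [q1]
      simp only [ev.neg_pow, ev2.neg_pow, o3.neg_pow]
      (try ring_nf) <;> (try norm_num)

lemma Tpos' (s : ℝ) (hs : 0 < s) :
    0 < (Real.exp s - Real.exp (-s))^3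
        - 2*s^2*((Real.exp s + Real.exp (-s))*(Real.exp s - Real.exp (-s)))
        - 8*s^2*(Real.exp s - Real.exp (-s))
        + 4*s^3*(Real.exp s + Real.exp (-s)) + 8*s^3 := by
  have H := hT s
  have hle := le_hasSum H 9 (fun j _ => term_nonneg s hs j)
  have hval : q1 s 9 + q2 s 9 + q3 s 9 + q4 s 9 = 5376/362880*s^9 := by
    show q1 s 9 + q2 s (7+2) + q3 s (6+3) + q4 s 9 = _
    norm_num [q1, q2, q3, q4, Nat.factorial]
    ring
  rw [hval] at hle
  have hpos : (0:ℝ) < 5376/362880*s^9 := by positivity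
  have h3 : Real.exp (3*s) = (Real.exp s)^3 := by
    rw [show (3:ℝ)*s = s+s+s by ring, Real.exp_add, Real.exp_add]; ring
  have h3' : Real.exp (-(3*s)) = (Real.exp (-s))^3 := by
    rw [show -(3*s) = (-s)+(-s)+(-s) by ring, Real.exp_add, Real.exp_add]; ring
  have h2 : Real.exp (2*s) = (Real.exp s)^2 := by
    rw [show (2:ℝ)*s = s+s by ring, Real.exp_add]; ring
  have h2' : Real.exp (-(2*s)) = (Real.exp (-s))^2 := by
    rw [show -(2*s) = (-s)+(-s) by ring, Real.exp_add]; ring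
  have hxy : Real.exp s * Real.exp (-s) = 1 := by
    rw [← Real.exp_add]; simp
  rw [h3, h3', h2, h2'] at hle
  have hTT : (Real.exp s - Real.exp (-s))^3
        - 2*s^2*((Real.exp s + Real.exp (-s))*(Real.exp s - Real.exp (-s)))
        - 8*s^2*(Real.exp s - Real.exp (-s))
        + 4*s^3*(Real.exp s + Real.exp (-s)) + 8*s^3 =
      (Real.exp s)^3 - (Real.exp (-s))^3 - 3*Real.exp s + 3*Real.exp (-s) +
          (-2 * s ^ 2 * ((Real.exp s)^2 - (Real.exp (-s))^2) +
           -8 * s ^ 2 * (Real.exp s - Real.exp (-s))) +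
        4 * s ^ 3 * (Real.exp s + Real.exp (-s)) + 8 * s ^ 3 := by
    linear_combination (-3*(Real.exp s - Real.exp (-s))) * hxy
  rw [hTT]
  exact lt_of_lt_of_le hpos hle

noncomputable def Rf (s : ℝ) : ℝ :=
  (Real.exp s + Real.exp (-s))/2 + 1 - (Real.exp s - Real.exp (-s))/(2*s)

noncomputable def Uf (s : ℝ) : ℝ :=
  s*(Real.exp s + Real.exp (-s))/(Real.exp s - Real.exp (-s))

noncomputable def Ff (s : ℝ) : ℝ := Real.log (Rf s) + 1 - Uf s

lemma Dpos {s : ℝ} (hs : 0 < s) : 0 < Real.exp s - Real.exp (-s) := by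
  have : Real.exp (-s) < Real.exp s := Real.exp_lt_exp.mpr (by linarith)
  linarith

lemma Npos {s : ℝ} (hs : 0 < s) :
    0 < s*Real.exp s + s*Real.exp (-s) + 2*s - Real.exp s + Real.exp (-s) := by
  rcases le_or_gt 1 s with h1 | h1
  · have h2 : 0 ≤ Real.exp s * (s - 1) := by
      apply mul_nonneg (Real.exp_pos s).le; linarith
    have h3 : 0 < Real.exp (-s) * (s + 1) := by positivity
    nlinarith
  · have h4 : 1 - s ≤ Real.exp (-s) := by
      have := Real.add_one_le_exp (-s); linarith
    have h5 : Real.exp s * (1 - s) ≤ 1 := by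
      have h6 : Real.exp s * Real.exp (-s) = 1 := by rw [← Real.exp_add]; simp
      nlinarith [Real.exp_pos s]
    nlinarith [Real.exp_pos (-s), Real.exp_pos s]

lemma Rf_pos {s : ℝ} (hs : 0 < s) : 0 < Rf s := by
  have hN := Npos hs
  have : Rf s = (s*Real.exp s + s*Real.exp (-s) + 2*s - Real.exp s + Real.exp (-s))/(2*s) := by
    unfold Rf; field_simp; ring
  rw [this]; positivity

lemma hasDerivAt_Rf {s : ℝ} (hs : 0 < s) :
    HasDerivAt Rf ((Real.exp s - Real.exp (-s))/2 -
      ((Real.exp s + Real.exp (-s))*(2*s) - (Real.exp s - Real.exp (-s))*2)/(2*s)^2) s := by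
  have he : HasDerivAt Real.exp (Real.exp s) s := Real.hasDerivAt_exp s
  have hen : HasDerivAt (fun t : ℝ => Real.exp (-t)) (-Real.exp (-s)) s := by
    simpa using (hasDerivAt_neg s).exp
  have hnum : HasDerivAt (fun t : ℝ => Real.exp t - Real.exp (-t))
      (Real.exp s + Real.exp (-s)) s := by
    simpa [sub_neg_eq_add] using he.fun_sub hen
  have hden : HasDerivAt (fun t : ℝ => 2*t) 2 s := by
    simpa using (hasDerivAt_id s).const_mul (2:ℝ)
  have hfrac : HasDerivAt (fun t : ℝ => (Real.exp t - Real.exp (-t))/(2*t))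
      (((Real.exp s + Real.exp (-s))*(2*s) - (Real.exp s - Real.exp (-s))*2)/(2*s)^2) s :=
    hnum.div hden (by positivity)
  have hc : HasDerivAt (fun t : ℝ => (Real.exp t + Real.exp (-t))/2 + 1)
      ((Real.exp s - Real.exp (-s))/2) s := by
    have := ((he.fun_add hen).div_const 2).add_const 1
    exact this.congr_deriv (by ring)
  exact hc.sub hfrac

lemma hasDerivAt_Uf {s : ℝ} (hs : 0 < s) :
    HasDerivAt Uf
      ((((Real.exp s + Real.exp (-s)) + s*(Real.exp s - Real.exp (-s)))*(Real.exp s - Real.exp (-s))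
        - (s*(Real.exp s + Real.exp (-s)))*(Real.exp s + Real.exp (-s)))/(Real.exp s - Real.exp (-s))^2) s := by
  have he : HasDerivAt Real.exp (Real.exp s) s := Real.hasDerivAt_exp s
  have hen : HasDerivAt (fun t : ℝ => Real.exp (-t)) (-Real.exp (-s)) s := by
    simpa using (hasDerivAt_neg s).exp
  have hnum : HasDerivAt (fun t : ℝ => t*(Real.exp t + Real.exp (-t)))
      ((Real.exp s + Real.exp (-s)) + s*(Real.exp s - Real.exp (-s))) s := by
    have := (hasDerivAt_id s).fun_mul (he.fun_add hen)
    simp only [id_eq, one_mul] at this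
    exact this.congr_deriv (by ring)
  have hden : HasDerivAt (fun t : ℝ => Real.exp t - Real.exp (-t))
      (Real.exp s + Real.exp (-s)) s := by
    simpa [sub_neg_eq_add] using he.fun_sub hen
  exact hnum.div hden (Dpos hs).ne'

lemma hasDerivAt_Ff {s : ℝ} (hs : 0 < s) :
    HasDerivAt Ff
      (((Real.exp s - Real.exp (-s))/2 -
        ((Real.exp s + Real.exp (-s))*(2*s) - (Real.exp s - Real.exp (-s))*2)/(2*s)^2) / Rf s -
       (((Real.exp s + Real.exp (-s)) + s*(Real.exp s - Real.exp (-s)))*(Real.exp s - Real.exp (-s))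
        - (s*(Real.exp s + Real.exp (-s)))*(Real.exp s + Real.exp (-s)))/(Real.exp s - Real.exp (-s))^2) s :=
  (((hasDerivAt_Rf hs).log (Rf_pos hs).ne').add_const 1).sub (hasDerivAt_Uf hs)

lemma deriv_Ff_pos {s : ℝ} (hs : 0 < s) :
    0 < ((Real.exp s - Real.exp (-s))/2 -
        ((Real.exp s + Real.exp (-s))*(2*s) - (Real.exp s - Real.exp (-s))*2)/(2*s)^2) / Rf s -
       (((Real.exp s + Real.exp (-s)) + s*(Real.exp s - Real.exp (-s)))*(Real.exp s - Real.exp (-s))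
        - (s*(Real.exp s + Real.exp (-s)))*(Real.exp s + Real.exp (-s)))/(Real.exp s - Real.exp (-s))^2 := by
  have hD := Dpos hs
  have hN := Npos hs
  have hT := Tpos' s hs
  have hs' : s ≠ 0 := hs.ne'
  have hxy : Real.exp s * Real.exp (-s) = 1 := by rw [← Real.exp_add]; simp
  have hRe : Rf s = (s*Real.exp s + s*Real.exp (-s) + 2*s - Real.exp s + Real.exp (-s))/(2*s) := by
    unfold Rf; field_simp; ring
  have hA : (Real.exp s - Real.exp (-s))/2 -
      ((Real.exp s + Real.exp (-s))*(2*s) - (Real.exp s - Real.exp (-s))*2)/(2*s)^2 =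
      (2*s^2*(Real.exp s - Real.exp (-s)) - 2*s*(Real.exp s + Real.exp (-s)) +
        2*(Real.exp s - Real.exp (-s)))/(4*s^2) := by
    field_simp; ring
  rw [hRe, hA]
  have h4 : (2*s^2*(Real.exp s - Real.exp (-s)) - 2*s*(Real.exp s + Real.exp (-s)) +
        2*(Real.exp s - Real.exp (-s)))/(4*s^2) /
      ((s*Real.exp s + s*Real.exp (-s) + 2*s - Real.exp s + Real.exp (-s))/(2*s)) =
      (2*s^2*(Real.exp s - Real.exp (-s)) - 2*s*(Real.exp s + Real.exp (-s)) +
        2*(Real.exp s - Real.exp (-s))) /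
      (2*s*(s*Real.exp s + s*Real.exp (-s) + 2*s - Real.exp s + Real.exp (-s))) := by
    rw [div_div_div_comm]
    rw [show (4:ℝ)*s^2 / (2*s) = 2*s by field_simp; ring]
    rw [div_div]; ring
  rw [h4, div_sub_div _ _ (by positivity : (2*s*(s*Real.exp s + s*Real.exp (-s) + 2*s - Real.exp s + Real.exp (-s))) ≠ 0) (by positivity : ((Real.exp s - Real.exp (-s))^2) ≠ 0)]
  have h5 : (2*s^2*(Real.exp s - Real.exp (-s)) - 2*s*(Real.exp s + Real.exp (-s)) +
        2*(Real.exp s - Real.exp (-s))) * (Real.exp s - Real.exp (-s))^2 -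
      (2*s*(s*Real.exp s + s*Real.exp (-s) + 2*s - Real.exp s + Real.exp (-s))) *
      (((Real.exp s + Real.exp (-s)) + s*(Real.exp s - Real.exp (-s)))*(Real.exp s - Real.exp (-s))
        - (s*(Real.exp s + Real.exp (-s)))*(Real.exp s + Real.exp (-s))) =
      2*((Real.exp s - Real.exp (-s))^3
        - 2*s^2*((Real.exp s + Real.exp (-s))*(Real.exp s - Real.exp (-s)))
        - 8*s^2*(Real.exp s - Real.exp (-s))
        + 4*s^3*(Real.exp s + Real.exp (-s)) + 8*s^3) := by
    linear_combination (-16*Real.exp s*s^2 + 16*Real.exp (-s)*s^2 + 8*Real.exp s*s^3 +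
      8*Real.exp (-s)*s^3 + 16*s^3) * hxy
  rw [h5]
  apply _root_.div_pos (by linarith)
  exact mul_pos (by positivity) (pow_pos hD 2)

lemma tendsto_D2s : Filter.Tendsto (fun t : ℝ => (Real.exp t - Real.exp (-t))/(2*t))
    (nhdsWithin 0 {(0:ℝ)}ᶜ) (nhds 1) := by
  have hd : HasDerivAt (fun t : ℝ => Real.exp t - Real.exp (-t)) 2 0 := by
    have he : HasDerivAt Real.exp (Real.exp 0) 0 := Real.hasDerivAt_exp 0
    have hen : HasDerivAt (fun t : ℝ => Real.exp (-t)) (-Real.exp (-0)) 0 := by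
      simpa using (hasDerivAt_neg 0).exp
    have := he.fun_sub hen
    norm_num at this
    convert this using 1
  rw [hasDerivAt_iff_tendsto_slope] at hd
  have h2 : Filter.Tendsto (fun t : ℝ => (Real.exp t - Real.exp (-t))/t/2)
      (nhdsWithin 0 {(0:ℝ)}ᶜ) (nhds 1) := by
    have := hd.div_const 2
    norm_num at this
    refine this.congr (fun t => ?_)
    simp [slope_def_field]
  refine h2.congr (fun t => ?_)
  rw [div_div]; ring

lemma tendsto_Ff : Filter.Tendsto Ff (nhdsWithin 0 (Set.Ioi (0:ℝ))) (nhds 0) := by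
  have hsub : nhdsWithin (0:ℝ) (Set.Ioi 0) ≤ nhdsWithin 0 {(0:ℝ)}ᶜ := by
    apply nhdsWithin_mono
    intro t ht
    exact ne_of_gt ht
  have hC : Filter.Tendsto (fun t : ℝ => (Real.exp t + Real.exp (-t))/2)
      (nhdsWithin 0 (Set.Ioi 0)) (nhds 1) := by
    have : Continuous (fun t : ℝ => (Real.exp t + Real.exp (-t))/2) := by continuity
    have h := this.tendsto 0
    norm_num at h
    exact h.mono_left nhdsWithin_le_nhds
  have hDs : Filter.Tendsto (fun t : ℝ => (Real.exp t - Real.exp (-t))/(2*t))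
      (nhdsWithin 0 (Set.Ioi 0)) (nhds 1) := tendsto_D2s.mono_left hsub
  have hR : Filter.Tendsto Rf (nhdsWithin 0 (Set.Ioi 0)) (nhds 1) := by
    have := (hC.add_const 1).sub hDs
    norm_num at this
    exact this
  have hlog : Filter.Tendsto (fun t => Real.log (Rf t)) (nhdsWithin 0 (Set.Ioi 0)) (nhds 0) := by
    have := (Real.continuousAt_log (one_ne_zero)).tendsto.comp hR
    simpa [Function.comp_def] using this
  have hU : Filter.Tendsto Uf (nhdsWithin 0 (Set.Ioi 0)) (nhds 1) := by
    have h := hC.div hDs one_ne_zero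
    norm_num at h
    refine h.congr' ?_
    filter_upwards [self_mem_nhdsWithin] with t ht
    have ht0 : (t:ℝ) ≠ 0 := ne_of_gt ht
    have hDt : Real.exp t - Real.exp (-t) ≠ 0 := (Dpos ht).ne'
    unfold Uf
    simp only [Pi.div_apply]
    field_simp
  have := (hlog.add_const 1).sub hU
  norm_num at this
  exact this

lemma Ff_pos {s : ℝ} (hs : 0 < s) : 0 < Ff s := by
  have mono : StrictMonoOn Ff (Set.Ioi 0) := by
    apply strictMonoOn_of_deriv_pos (convex_Ioi 0)
    · intro x hx
      exact (hasDerivAt_Ff hx).continuousAt.continuousWithinAt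
    · intro x hx
      rw [interior_Ioi] at hx
      rw [(hasDerivAt_Ff hx).deriv]
      exact deriv_Ff_pos hx
  have nonneg : ∀ u : ℝ, 0 < u → 0 ≤ Ff u := by
    intro u hu
    refine le_of_tendsto tendsto_Ff ?_
    filter_upwards [Ioo_mem_nhdsGT_of_mem (Set.left_mem_Ico.mpr hu)] with t ht
    exact (mono (Set.mem_Ioi.mpr ht.1) (Set.mem_Ioi.mpr hu) ht.2).le
  have h1 : Ff (s/2) < Ff s :=
    mono (Set.mem_Ioi.mpr (by linarith)) (Set.mem_Ioi.mpr hs) (by linarith)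
  have h2 := nonneg (s/2) (by linarith)
  linarith

lemma core {s : ℝ} (hs : 0 < s) :
    (Real.exp s - Real.exp (-s))/(2*s) +
      Real.exp (s*(Real.exp s + Real.exp (-s))/(Real.exp s - Real.exp (-s)) - 1) <
    (Real.exp s + Real.exp (-s))/2 + 1 := by
  have hF := Ff_pos hs
  unfold Ff Uf at hF
  have h1 : s*(Real.exp s + Real.exp (-s))/(Real.exp s - Real.exp (-s)) - 1 < Real.log (Rf s) := by
    linarith
  have h2 : Real.exp (s*(Real.exp s + Real.exp (-s))/(Real.exp s - Real.exp (-s)) - 1) < Rf s := by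
    calc Real.exp (s*(Real.exp s + Real.exp (-s))/(Real.exp s - Real.exp (-s)) - 1)
        < Real.exp (Real.log (Rf s)) := Real.exp_lt_exp.mpr h1
      _ = Rf s := Real.exp_log (Rf_pos hs)
  unfold Rf at h2
  linarith

theorem sandor_coro_LG (a b : ℝ) (ha : 0 < a) (hb : 0 < b) (hab : a ≠ b) :
    ((a - b) / (Real.log a - Real.log b)) / Real.sqrt (a * b) <
      1 + Real.sqrt (a * b) / (2 * a * b / (a + b)) -
        ((1 / exp 1) * (a ^ a / b ^ b) ^ (1 / (a - b))) / Real.sqrt (a * b) := by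
  wlog hba : b < a with H
  · have hba' : a < b := lt_of_le_of_ne (not_lt.mp hba) hab
    have key := H b a hb ha hab.symm hba'
    have e1 : (b - a) / (Real.log b - Real.log a) = (a - b) / (Real.log a - Real.log b) := by
      rw [show b - a = -(a - b) by ring, show Real.log b - Real.log a = -(Real.log a - Real.log b) by ring,
        neg_div_neg_eq]
    have e2 : b * a = a * b := mul_comm b a
    have e3 : (2 * b * a / (b + a)) = (2 * a * b / (a + b)) := by rw [add_comm b a]; ring_nf
    have hx : (0:ℝ) < a ^ a / b ^ b :=
      div_pos (Real.rpow_pos_of_pos ha a) (Real.rpow_pos_of_pos hb b)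
    have e4 : (b ^ b / a ^ a) ^ (1 / (b - a)) = (a ^ a / b ^ b) ^ (1 / (a - b)) := by
      rw [show b ^ b / a ^ a = (a ^ a / b ^ b)⁻¹ from (inv_div _ _).symm,
        Real.inv_rpow hx.le, ← Real.rpow_neg hx.le,
        show -(1 / (b - a)) = 1 / (a - b) by
          rw [show a - b = -(b - a) by ring, div_neg]]
    rw [e1, e2, e3, e4] at key
    exact key
  -- main case b < a
  have hlab : Real.log b < Real.log a := Real.log_lt_log hb hba
  set g0 := (Real.log a + Real.log b) / 2 with hg0
  set s := (Real.log a - Real.log b) / 2 with hs_def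
  have hs : 0 < s := by rw [hs_def]; linarith
  set G := Real.sqrt (a * b) with hG
  have hGpos : 0 < G := Real.sqrt_pos.mpr (by positivity)
  have hGe : G = Real.exp g0 := by
    rw [hG, show a * b = (Real.exp g0) ^ 2 by
      rw [sq, ← Real.exp_add, show g0 + g0 = Real.log a + Real.log b by rw [hg0]; ring,
        Real.exp_add, Real.exp_log ha, Real.exp_log hb]]
    exact Real.sqrt_sq (Real.exp_pos _).le
  have ha' : a = G * Real.exp s := by
    rw [hGe, ← Real.exp_add, show g0 + s = Real.log a by rw [hg0, hs_def]; ring,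
      Real.exp_log ha]
  have hb' : b = G * Real.exp (-s) := by
    rw [hGe, ← Real.exp_add, show g0 + -s = Real.log b by rw [hg0, hs_def]; ring,
      Real.exp_log hb]
  have hD : 0 < Real.exp s - Real.exp (-s) := by
    have : Real.exp (-s) < Real.exp s := Real.exp_lt_exp.mpr (by linarith)
    linarith
  have hlog2 : Real.log a - Real.log b = 2 * s := by rw [hs_def]; ring
  have hy : Real.exp (-s) = (Real.exp s)⁻¹ := Real.exp_neg s
  have hxne : Real.exp s ≠ 0 := (Real.exp_pos s).ne'
  have e1 : (a - b) / (Real.log a - Real.log b) / G = (Real.exp s - Real.exp (-s))/(2*s) := by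
    rw [hlog2, ha', hb']
    field_simp
  have e2 : G / (2 * a * b / (a + b)) = (Real.exp s + Real.exp (-s))/2 := by
    rw [ha', hb', hy]
    have hsum : 0 < Real.exp s + (Real.exp s)⁻¹ := by positivity
    field_simp
  have e3 : ((1 / Real.exp 1) * (a ^ a / b ^ b) ^ (1 / (a - b))) / G =
      Real.exp (s*(Real.exp s + Real.exp (-s))/(Real.exp s - Real.exp (-s)) - 1) := by
    have hla : Real.log a = g0 + s := by rw [hg0, hs_def]; ring
    have hlb : Real.log b = g0 - s := by rw [hg0, hs_def]; ring
    have hdiv : a ^ a / b ^ b = Real.exp (Real.log a * a - Real.log b * b) := by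
      rw [Real.rpow_def_of_pos ha, Real.rpow_def_of_pos hb, ← Real.exp_sub]
    have hrp : (a ^ a / b ^ b) ^ (1 / (a - b)) =
        Real.exp ((Real.log a * a - Real.log b * b) * (1 / (a - b))) := by
      rw [hdiv, Real.rpow_def_of_pos (Real.exp_pos _), Real.log_exp]
    have habne : Real.exp g0 * Real.exp s - Real.exp g0 * Real.exp (-s) ≠ 0 := by
      have h1 : 0 < Real.exp g0 * (Real.exp s - Real.exp (-s)) :=
        mul_pos (Real.exp_pos _) hD
      intro h; apply h1.ne'; linarith [h]
      
    have hW : (Real.log a * a - Real.log b * b) * (1 / (a - b)) =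
        g0 + s*(Real.exp s + Real.exp (-s))/(Real.exp s - Real.exp (-s)) := by
      rw [hla, hlb, ha', hb', hGe]
      field_simp [habne, hD.ne']
      ring
    rw [hrp, hGe, show (1:ℝ) / Real.exp 1 = Real.exp (-1) from by
      rw [Real.exp_neg]; exact one_div _, ← Real.exp_add, ← Real.exp_sub]
    congr 1
    rw [hW]
    ring
  rw [e1, e2, e3]
  have := core hs
  linarith
end

section
/- For all x in (0, π/2), e^{(x·cot(x) - 1)/2} < sin(x)/x < e^{(log(π/2))·(x·cot(x) - 1)}. -/
set_option linter.unreachableTactic false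
set_option linter.unusedTactic false

open Real Set Filter Topology

private lemma chain_pos {f : ℝ → ℝ} {b : ℝ} (hb : 0 < b)
    (hc : ContinuousOn f (Icc 0 b)) (h0 : f 0 = 0)
    (hd : ∀ x ∈ Ioo 0 b, 0 < deriv f x) :
    ∀ x ∈ Ioo 0 b, 0 < f x := by
  intro x hx
  have hm : StrictMonoOn f (Icc 0 b) := by
    apply strictMonoOn_of_deriv_pos (convex_Icc 0 b) hc
    intro y hy; rw [interior_Icc] at hy; exact hd y hy
  have := hm (left_mem_Icc.2 hb.le) ⟨hx.1.le, hx.2.le⟩ hx.1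
  rwa [h0] at this

private lemma g3_pos : ∀ t ∈ Ioo (0:ℝ) π, 0 < sin t - t * cos t := by
  apply chain_pos pi_pos
  · exact (continuous_sin.sub (continuous_id.mul continuous_cos)).continuousOn
  · simp
  · intro t ht
    have hd : HasDerivAt (fun t => sin t - t * cos t) (t * sin t) t := by
      have h := (Real.hasDerivAt_sin t).sub ((hasDerivAt_id t).mul (Real.hasDerivAt_cos t))
      refine h.congr_deriv ?_; first | ring1 | (simp only [id_eq]; ring1) | (push_cast [id_eq]; ring1) | (norm_num [id_eq]; ring1) | norm_num [id_eq]
    rw [hd.deriv]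
    exact mul_pos ht.1 (sin_pos_of_pos_of_lt_pi ht.1 ht.2)

private lemma g2_pos : ∀ t ∈ Ioo (0:ℝ) π, 0 < 2 - 2 * cos t - t * sin t := by
  apply chain_pos pi_pos
  · fun_prop
  · simp
  · intro t ht
    have hd : HasDerivAt (fun t => 2 - 2 * cos t - t * sin t) (sin t - t * cos t) t := by
      have h := ((hasDerivAt_const t (2:ℝ)).sub ((Real.hasDerivAt_cos t).const_mul 2)).sub
        ((hasDerivAt_id t).mul (Real.hasDerivAt_sin t))
      refine h.congr_deriv ?_; first | ring1 | (simp only [id_eq]; ring1) | (push_cast [id_eq]; ring1) | (norm_num [id_eq]; ring1) | norm_num [id_eq]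
    rw [hd.deriv]
    exact g3_pos t ht

private lemma g1_pos : ∀ t ∈ Ioo (0:ℝ) π, 0 < 2 * t + t * cos t - 3 * sin t := by
  apply chain_pos pi_pos
  · fun_prop
  · simp
  · intro t ht
    have hd : HasDerivAt (fun t => 2 * t + t * cos t - 3 * sin t)
        (2 - 2 * cos t - t * sin t) t := by
      have h := (((hasDerivAt_id t).const_mul 2).add ((hasDerivAt_id t).mul
        (Real.hasDerivAt_cos t))).sub ((Real.hasDerivAt_sin t).const_mul 3)
      refine h.congr_deriv ?_; first | ring1 | (simp only [id_eq]; ring1) | (push_cast [id_eq]; ring1) | (norm_num [id_eq]; ring1) | norm_num [id_eq]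
    rw [hd.deriv]
    exact g2_pos t ht

private lemma g0_pos : ∀ t ∈ Ioo (0:ℝ) π, 0 < t * sin t + t^2 + 4 * cos t - 4 := by
  apply chain_pos pi_pos
  · fun_prop
  · simp
  · intro t ht
    have hd : HasDerivAt (fun t => t * sin t + t^2 + 4 * cos t - 4)
        (2 * t + t * cos t - 3 * sin t) t := by
      have h := ((((hasDerivAt_id t).mul (Real.hasDerivAt_sin t)).add
        (hasDerivAt_pow 2 t)).add ((Real.hasDerivAt_cos t).const_mul 4)).sub
        (hasDerivAt_const t 4)
      refine h.congr_deriv ?_; first | ring1 | (simp only [id_eq]; ring1) | (push_cast [id_eq]; ring1) | (norm_num [id_eq]; ring1) | norm_num [id_eq]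
    rw [hd.deriv]
    exact g1_pos t ht

private lemma h_pos : ∀ x ∈ Ioo (0:ℝ) (π/2), 0 < x^2 + x * (sin x * cos x) - 2 * sin x^2 := by
  intro x hx
  have h2x : 2 * x ∈ Ioo (0:ℝ) π := ⟨by linarith [hx.1], by linarith [hx.2]⟩
  have h := g0_pos (2*x) h2x
  rw [Real.sin_two_mul, Real.cos_two_mul] at h
  nlinarith [sin_sq_add_cos_sq x]

private lemma cos_gt_quad : ∀ v ∈ Ioo (0:ℝ) π, 0 < cos v - 1 + v^2/2 := by
  apply chain_pos pi_pos
  · fun_prop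
  · simp
  · intro t ht
    have hd : HasDerivAt (fun t => cos t - 1 + t^2/2) (t - sin t) t := by
      have h := ((Real.hasDerivAt_cos t).sub (hasDerivAt_const t 1)).add
        ((hasDerivAt_pow 2 t).div_const 2)
      refine h.congr_deriv ?_; first | ring1 | (simp only [id_eq]; ring1) | (push_cast [id_eq]; ring1) | (norm_num [id_eq]; ring1) | norm_num [id_eq]
    rw [hd.deriv]
    linarith [Real.sin_lt ht.1]

private lemma sin_gt_cubic : ∀ v ∈ Ioo (0:ℝ) π, 0 < sin v - v + v^3/6 := by
  apply chain_pos pi_pos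
  · fun_prop
  · simp
  · intro t ht
    have hd : HasDerivAt (fun t => sin t - t + t^3/6) (cos t - 1 + t^2/2) t := by
      have h := ((Real.hasDerivAt_sin t).sub (hasDerivAt_id t)).add
        ((hasDerivAt_pow 3 t).div_const 6)
      refine h.congr_deriv ?_; first | ring1 | (simp only [id_eq]; ring1) | (push_cast [id_eq]; ring1) | (norm_num [id_eq]; ring1) | norm_num [id_eq]
    rw [hd.deriv]
    exact cos_gt_quad t ht

private lemma tan_gt_cubic : ∀ v ∈ Ioo (0:ℝ) (π/2), v + v^3/3 < sin v / cos v := by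
  have key : ∀ v ∈ Ico (0:ℝ) (π/2), HasDerivAt (fun v => sin v / cos v - (v + v^3/3))
      ((cos v * cos v - sin v * (-sin v)) / cos v^2 - (1 + v^2)) v := by
    intro v hv
    have hC : 0 < cos v := Real.cos_pos_of_mem_Ioo ⟨by linarith [hv.1, pi_pos], hv.2⟩
    have h := ((Real.hasDerivAt_sin v).div (Real.hasDerivAt_cos v) hC.ne').sub
      ((hasDerivAt_id v).add ((hasDerivAt_pow 3 v).div_const 3))
    refine h.congr_deriv ?_; first | ring1 | (simp only [id_eq]; ring1) | (push_cast [id_eq]; ring1) | (norm_num [id_eq]; ring1) | norm_num [id_eq]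
  intro v hv
  have hm : StrictMonoOn (fun v => sin v / cos v - (v + v^3/3)) (Ico 0 (π/2)) := by
    apply strictMonoOn_of_deriv_pos (convex_Ico 0 (π/2))
    · intro t ht; exact ((key t ht).differentiableAt).continuousAt.continuousWithinAt
    · intro t ht
      rw [interior_Ico] at ht
      rw [(key t ⟨ht.1.le, ht.2⟩).deriv]
      have hC : 0 < cos t := Real.cos_pos_of_mem_Ioo ⟨by linarith [ht.1, pi_pos], ht.2⟩
      have hg3 := g3_pos t ⟨ht.1, by linarith [ht.2, pi_pos]⟩
      have heq : (cos t * cos t - sin t * (-sin t)) / cos t^2 - (1 + t^2)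
          = (sin t^2 - t^2 * cos t^2) / cos t^2 := by
        field_simp; ring
      rw [heq]
      apply div_pos _ (by positivity)
      have hs : 0 < sin t := sin_pos_of_pos_of_lt_pi ht.1 (by linarith [ht.2, pi_pos])
      nlinarith [mul_pos (mul_pos ht.1 hC) hs]
  have h0 : (fun v => sin v / cos v - (v + v^3/3)) 0 = 0 := by simp
  have := hm (left_mem_Ico.2 (by linarith [pi_pos])) ⟨hv.1.le, hv.2⟩ hv.1
  rw [h0] at this
  linarith [this]

private lemma am_pos : ∀ v ∈ Ioo (0:ℝ) (π/2), v^3 * cos v < sin v^3 := by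
  have key : ∀ v ∈ Ico (0:ℝ) (π/2), HasDerivAt (fun v => sin v^3 / cos v - v^3)
      ((3 * sin v^2 * cos v * cos v - sin v^3 * (-sin v)) / cos v^2 - 3 * v^2) v := by
    intro v hv
    have hC : 0 < cos v := Real.cos_pos_of_mem_Ioo ⟨by linarith [hv.1, pi_pos], hv.2⟩
    have h := (((Real.hasDerivAt_sin v).pow 3).div (Real.hasDerivAt_cos v) hC.ne').sub
      (hasDerivAt_pow 3 v)
    refine h.congr_deriv ?_
    try first | ring1 | (simp only [id_eq]; ring1) | (push_cast [id_eq]; ring1) | (norm_num [id_eq]; ring1) | norm_num [id_eq]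
  have hm : StrictMonoOn (fun v => sin v^3 / cos v - v^3) (Ico 0 (π/2)) := by
    apply strictMonoOn_of_deriv_pos (convex_Ico 0 (π/2))
    · intro t ht; exact ((key t ht).differentiableAt).continuousAt.continuousWithinAt
    · intro t ht
      rw [interior_Ico] at ht
      rw [(key t ⟨ht.1.le, ht.2⟩).deriv]
      have hC : 0 < cos t := Real.cos_pos_of_mem_Ioo ⟨by linarith [ht.1, pi_pos], ht.2⟩
      have hs : 0 < sin t := sin_pos_of_pos_of_lt_pi ht.1 (by linarith [ht.2, pi_pos])
      have ht2 : t^2 < 5/2 := by nlinarith [pi_lt_d2, ht.2, ht.1]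
      have hb : 0 < t - t^3/6 := by nlinarith [ht.1]
      have hsb : t - t^3/6 < sin t := by
        have := sin_gt_cubic t ⟨ht.1, by linarith [ht.2, pi_pos]⟩; linarith
      have hsa : cos t * (t + t^3/3) < sin t := by
        have h1 := tan_gt_cubic t ht
        calc cos t * (t + t^3/3) < cos t * (sin t / cos t) := by
              exact (mul_lt_mul_iff_right₀ hC).2 h1
          _ = sin t := by field_simp
      have hap : 0 < cos t * (t + t^3/3) := mul_pos hC (by nlinarith [ht.1, pow_pos ht.1 3])
      have h1 : (cos t * (t + t^3/3))^2 < sin t^2 := by nlinarith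
      have h2 : (t - t^3/6)^2 < sin t^2 := by nlinarith
      have h4 : (cos t * (t + t^3/3))^2 * (t - t^3/6)^2 < sin t^4 := by
        nlinarith [mul_lt_mul_of_pos_left h2 (mul_pos hap hap), sq_nonneg (sin t)]
      have hpoly : 0 < 3 * (t - t^3/6)^2 + (t + t^3/3)^2 * (t - t^3/6)^2 - 3 * t^2 := by
        nlinarith [ht.1, ht2, sq_nonneg t, pow_pos ht.1 3, pow_pos ht.1 6]
      have heq : (3 * sin t^2 * cos t * cos t - sin t^3 * (-sin t)) / cos t^2 - 3 * t^2
          = (3 * sin t^2 * cos t^2 + sin t^4 - 3 * t^2 * cos t^2) / cos t^2 := by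
        field_simp; ring
      rw [heq]
      apply div_pos _ (by positivity)
      have h5 : 3 * (t - t^3/6)^2 * cos t^2 < 3 * sin t^2 * cos t^2 := by
        nlinarith [mul_lt_mul_of_pos_right h2 (pow_pos hC 2)]
      nlinarith [h4, h5, mul_pos (mul_pos hC hC) hpoly]
  intro v hv
  have hC : 0 < cos v := Real.cos_pos_of_mem_Ioo ⟨by linarith [hv.1, pi_pos], hv.2⟩
  have h0 : (fun v => sin v^3 / cos v - v^3) 0 = 0 := by simp
  have hk := hm (left_mem_Ico.2 (by linarith [pi_pos])) ⟨hv.1.le, hv.2⟩ hv.1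
  rw [h0] at hk
  have := mul_pos hC hk
  rw [mul_sub, mul_div_cancel₀ _ hC.ne'] at this
  nlinarith [this]

private lemma phi_pos : ∀ t ∈ Ioo (0:ℝ) π,
    0 < t^3 * cos t - 3 * t^2 * sin t + 6 * t - 6 * (t * cos t) - 2 * sin t + sin (2*t) := by
  apply chain_pos pi_pos
  · fun_prop
  · simp
  · intro t ht
    have hd : HasDerivAt
        (fun t => t^3 * cos t - 3 * t^2 * sin t + 6 * t - 6 * (t * cos t) - 2 * sin t + sin (2*t))
        (-(t^3 * sin t) + 6 - 8 * cos t + 2 * cos (2*t)) t := by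
      have h1 : HasDerivAt (fun t : ℝ => sin (2*t)) (cos (2*t) * 2) t := by
        have := (Real.hasDerivAt_sin (2*t)).comp t (((hasDerivAt_id t).const_mul 2) :
          HasDerivAt (fun y : ℝ => 2 * id y) (2*1) t)
        exact this.congr_deriv (by ring)
      have h := (((((hasDerivAt_pow 3 t).mul (Real.hasDerivAt_cos t)).sub
        (((hasDerivAt_pow 2 t).const_mul 3).mul (Real.hasDerivAt_sin t))).add
        ((hasDerivAt_id t).const_mul 6)).sub
        (((hasDerivAt_id t).mul (Real.hasDerivAt_cos t)).const_mul 6)).sub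
        ((Real.hasDerivAt_sin t).const_mul 2) |>.add h1
      refine h.congr_deriv ?_
      try first | ring1 | (simp only [id_eq]; ring1) | (push_cast [id_eq]; ring1) | (norm_num [id_eq]; ring1) | norm_num [id_eq]
    rw [hd.deriv]
    have hv : t/2 ∈ Ioo (0:ℝ) (π/2) := ⟨by linarith [ht.1], by linarith [ht.2]⟩
    have ham := am_pos (t/2) hv
    have hsv : 0 < sin (t/2) := sin_pos_of_pos_of_lt_pi hv.1 (by linarith [hv.2, pi_pos])
    have h1 : sin t = 2 * sin (t/2) * cos (t/2) := by
      have := Real.sin_two_mul (t/2); rwa [show 2*(t/2) = t by ring] at this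
    have h2 : cos t = 1 - 2 * sin (t/2)^2 := by
      have hh := Real.cos_two_mul (t/2)
      rw [show 2*(t/2) = t by ring] at hh
      have hp := sin_sq_add_cos_sq (t/2)
      linarith
    have h3 : cos (2*t) = 2 * cos t^2 - 1 := Real.cos_two_mul t
    rw [h3, h1, h2]
    nlinarith [mul_lt_mul_of_pos_left ham hsv, sq_nonneg (sin (t/2))]

private noncomputable def LL (x : ℝ) : ℝ := Real.log x - Real.log (Real.sin x)
private noncomputable def AA (x : ℝ) : ℝ := x * (Real.cos x / Real.sin x)
private noncomputable def FF (x : ℝ) : ℝ := (1 - AA x) / 2 - LL x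
private noncomputable def GG (x : ℝ) : ℝ := LL x - Real.log (π/2) * (1 - AA x)
private noncomputable def NN (x : ℝ) : ℝ := Real.sin x^2 - x * (Real.sin x * Real.cos x)
private noncomputable def DD (x : ℝ) : ℝ := x^2 - x * (Real.sin x * Real.cos x)
private noncomputable def rr (x : ℝ) : ℝ := NN x / DD x

private lemma DD_pos {x : ℝ} (hx : x ∈ Ioo (0:ℝ) π) : 0 < DD x := by
  have hs : 0 < sin x := sin_pos_of_pos_of_lt_pi hx.1 hx.2
  have h1 : sin x < x := Real.sin_lt hx.1
  have h2 : cos x ≤ 1 := Real.cos_le_one x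
  have h3 : -1 ≤ cos x := Real.neg_one_le_cos x
  unfold DD
  nlinarith [mul_le_mul_of_nonneg_left (mul_le_of_le_one_right hs.le h2) hx.1.le,
    mul_lt_mul_of_pos_left h1 hx.1]

private lemma NN_pos {x : ℝ} (hx : x ∈ Ioo (0:ℝ) π) : 0 < NN x := by
  have hs : 0 < sin x := sin_pos_of_pos_of_lt_pi hx.1 hx.2
  have hg3 := g3_pos x hx
  unfold NN
  nlinarith

private lemma hasDerivAt_AA {x : ℝ} (hx : x ∈ Ioo (0:ℝ) π) :
    HasDerivAt AA (cos x / sin x + x * (-(1 / sin x^2))) x := by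
  have hs : 0 < sin x := sin_pos_of_pos_of_lt_pi hx.1 hx.2
  have hcd : HasDerivAt (fun y => cos y / sin y) (-(1 / sin x^2)) x := by
    have h := (Real.hasDerivAt_cos x).div (Real.hasDerivAt_sin x) hs.ne'
    refine h.congr_deriv ?_
    have hone : -sin x * sin x - cos x * cos x = -1 := by
      nlinarith [sin_sq_add_cos_sq x]
    rw [hone]; ring
  have h := (hasDerivAt_id x).mul hcd
  refine h.congr_deriv ?_
  simp only [id_eq]; ring

private lemma hasDerivAt_GG {x : ℝ} (hx : x ∈ Ioo (0:ℝ) π) :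
    HasDerivAt GG ((NN x - Real.log (π/2) * DD x) / (x * sin x^2)) x := by
  have hs : 0 < sin x := sin_pos_of_pos_of_lt_pi hx.1 hx.2
  have hlogsin : HasDerivAt (fun y => Real.log (sin y)) ((sin x)⁻¹ * cos x) x :=
    (Real.hasDerivAt_log hs.ne').comp x (Real.hasDerivAt_sin x)
  have hL : HasDerivAt LL (x⁻¹ - (sin x)⁻¹ * cos x) x :=
    (Real.hasDerivAt_log hx.1.ne').sub hlogsin
  have h := hL.sub (((hasDerivAt_const x (1:ℝ)).sub (hasDerivAt_AA hx)).const_mul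
    (Real.log (π/2)))
  refine h.congr_deriv ?_
  unfold NN DD
  field_simp [hx.1.ne', hs.ne']
  ring

private lemma hasDerivAt_FF {x : ℝ} (hx : x ∈ Ioo (0:ℝ) π) :
    HasDerivAt FF ((x^2 + x * (sin x * cos x) - 2 * sin x^2) / (2 * (x * sin x^2))) x := by
  have hs : 0 < sin x := sin_pos_of_pos_of_lt_pi hx.1 hx.2
  have hlogsin : HasDerivAt (fun y => Real.log (sin y)) ((sin x)⁻¹ * cos x) x :=
    (Real.hasDerivAt_log hs.ne').comp x (Real.hasDerivAt_sin x)
  have hL : HasDerivAt LL (x⁻¹ - (sin x)⁻¹ * cos x) x :=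
    (Real.hasDerivAt_log hx.1.ne').sub hlogsin
  have h := (((hasDerivAt_const x (1:ℝ)).sub (hasDerivAt_AA hx)).div_const 2).sub hL
  refine h.congr_deriv ?_
  field_simp [hx.1.ne', hs.ne']
  ring

private lemma hasDerivAt_rr {x : ℝ} (hx : x ∈ Ioo (0:ℝ) π) :
    HasDerivAt rr (((sin x * cos x - x * (cos x^2 - sin x^2)) * DD x -
      NN x * (2*x - (sin x * cos x + x * (cos x^2 - sin x^2)))) / (DD x)^2) x := by
  have hsc : HasDerivAt (fun y => sin y * cos y) (cos x * cos x + sin x * (-sin x)) x :=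
    (Real.hasDerivAt_sin x).mul (Real.hasDerivAt_cos x)
  have hN : HasDerivAt NN (sin x * cos x - x * (cos x^2 - sin x^2)) x := by
    have h := ((Real.hasDerivAt_sin x).pow 2).sub ((hasDerivAt_id x).mul hsc)
    refine h.congr_deriv ?_
    try first | ring1 | (simp only [id_eq]; ring1) | (push_cast [id_eq]; ring1) | (norm_num [id_eq]; ring1) | norm_num [id_eq]
  have hD : HasDerivAt DD (2*x - (sin x * cos x + x * (cos x^2 - sin x^2))) x := by
    have h := (hasDerivAt_pow 2 x).sub ((hasDerivAt_id x).mul hsc)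
    refine h.congr_deriv ?_
    try first | ring1 | (simp only [id_eq]; ring1) | (push_cast [id_eq]; ring1) | (norm_num [id_eq]; ring1) | norm_num [id_eq]
  exact hN.div hD (DD_pos hx).ne'

private lemma deriv_rr_neg {x : ℝ} (hx : x ∈ Ioo (0:ℝ) (π/2)) : deriv rr x < 0 := by
  have hxp : x ∈ Ioo (0:ℝ) π := ⟨hx.1, by linarith [hx.2, pi_pos]⟩
  rw [(hasDerivAt_rr hxp).deriv]
  apply div_neg_of_neg_of_pos _ (pow_pos (DD_pos hxp) 2)
  have hphi := phi_pos (2*x) ⟨by linarith [hx.1], by linarith [hx.2]⟩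
  rw [Real.sin_two_mul (2*x), Real.sin_two_mul x, Real.cos_two_mul x] at hphi
  have heq : (sin x * cos x - x * (cos x^2 - sin x^2)) * DD x -
      NN x * (2*x - (sin x * cos x + x * (cos x^2 - sin x^2)))
      = -((2*x)^3 * (2*cos x^2 - 1) - 3*(2*x)^2*(2*(sin x)*(cos x)) + 6*(2*x)
          - 6*((2*x)*(2*cos x^2 - 1)) - 2*(2*(sin x)*(cos x))
          + 2*(2*(sin x)*(cos x))*(2*cos x^2 - 1))/8 := by
    unfold NN DD
    linear_combination (x^3 - 3*x + sin x * cos x - sin x^2 * x) * sin_sq_add_cos_sq x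
  rw [heq]
  nlinarith [hphi]

private lemma rr_anti : StrictAntiOn rr (Ioo 0 (π/2)) := by
  apply strictAntiOn_of_deriv_neg (convex_Ioo 0 (π/2))
  · intro t ht
    exact (hasDerivAt_rr ⟨ht.1, by linarith [ht.2, pi_pos]⟩).differentiableAt.continuousAt.continuousWithinAt
  · intro t ht; rw [interior_Ioo] at ht; exact deriv_rr_neg ht

private lemma pos_of_limit {f : ℝ → ℝ} {x : ℝ} (hx : 0 < x)
    (hm : StrictMonoOn f (Ioc 0 x)) (hl : Tendsto f (𝓝[>] (0:ℝ)) (𝓝 0)) : 0 < f x := by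
  have hmem : x/2 ∈ Ioc (0:ℝ) x := ⟨half_pos hx, (half_le_self hx.le)⟩
  have h2 : 0 ≤ f (x/2) := by
    refine le_of_tendsto hl ?_
    filter_upwards [Ioo_mem_nhdsGT_of_mem (⟨le_refl 0, half_pos hx⟩ : (0:ℝ) ∈ Ico 0 (x/2))]
    intro t ht
    exact (hm ⟨ht.1, le_trans ht.2.le (half_le_self hx.le)⟩ hmem ht.2).le
  exact lt_of_le_of_lt h2 (hm hmem ⟨hx, le_rfl⟩ (half_lt_self hx))

private lemma tendsto_sin_div : Tendsto (fun t => sin t / t) (𝓝[>] (0:ℝ)) (𝓝 1) := by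
  have h := Real.hasDerivAt_sin 0
  rw [hasDerivAt_iff_tendsto_slope] at h
  rw [Real.cos_zero] at h
  have h2 : Tendsto (slope sin 0) (𝓝[>] (0:ℝ)) (𝓝 1) :=
    h.mono_left (nhdsWithin_mono _ (fun t ht => ne_of_gt ht))
  refine h2.congr' ?_
  filter_upwards [self_mem_nhdsWithin]
  intro t ht
  simp [slope_def_field]

private lemma tendsto_LL : Tendsto LL (𝓝[>] (0:ℝ)) (𝓝 0) := by
  have h1 : Tendsto (fun t => sin t / t) (𝓝[>] (0:ℝ)) (𝓝 1) := tendsto_sin_div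
  have h2 : Tendsto (fun t => Real.log (sin t / t)) (𝓝[>] (0:ℝ)) (𝓝 0) := by
    have := (Real.continuousAt_log one_ne_zero).tendsto.comp h1
    rwa [Real.log_one] at this
  have h3 : Tendsto (fun t => -Real.log (sin t / t)) (𝓝[>] (0:ℝ)) (𝓝 0) := by
    simpa using h2.neg
  refine h3.congr' ?_
  filter_upwards [Ioo_mem_nhdsGT_of_mem (⟨le_refl 0, by linarith [pi_pos]⟩ : (0:ℝ) ∈ Ico 0 π)]
  intro t ht
  have hs : 0 < sin t := sin_pos_of_pos_of_lt_pi ht.1 ht.2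
  rw [Real.log_div hs.ne' ht.1.ne']
  unfold LL
  ring

private lemma tendsto_AA : Tendsto AA (𝓝[>] (0:ℝ)) (𝓝 1) := by
  have hc : Tendsto (fun t : ℝ => cos t) (𝓝[>] (0:ℝ)) (𝓝 1) := by
    have := (Real.continuous_cos.tendsto 0)
    rw [Real.cos_zero] at this
    exact this.mono_left nhdsWithin_le_nhds
  have h := hc.div tendsto_sin_div one_ne_zero
  rw [div_one] at h
  refine h.congr' ?_
  filter_upwards [Ioo_mem_nhdsGT_of_mem (⟨le_refl 0, by linarith [pi_pos]⟩ : (0:ℝ) ∈ Ico 0 π)]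
  intro t ht
  have hs : 0 < sin t := sin_pos_of_pos_of_lt_pi ht.1 ht.2
  unfold AA
  simp only [Pi.div_apply]
  field_simp

private lemma tendsto_one : Tendsto (fun _ : ℝ => (1:ℝ)) (𝓝[>] (0:ℝ)) (𝓝 1) :=
  tendsto_const_nhds

private lemma tendsto_FF : Tendsto FF (𝓝[>] (0:ℝ)) (𝓝 0) := by
  have h := ((tendsto_one.sub tendsto_AA).div_const 2).sub tendsto_LL
  have he : ((1:ℝ) - 1)/2 - 0 = 0 := by norm_num
  rw [he] at h
  exact h.congr (fun t => by unfold FF; ring)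

private lemma tendsto_GG : Tendsto GG (𝓝[>] (0:ℝ)) (𝓝 0) := by
  have h := tendsto_LL.sub ((tendsto_one.sub tendsto_AA).const_mul (Real.log (π/2)))
  have he : (0:ℝ) - Real.log (π/2) * (1 - 1) = 0 := by ring
  rw [he] at h
  exact h.congr (fun t => by unfold GG; ring)

private lemma FF_pos {x : ℝ} (hx : x ∈ Ioo (0:ℝ) (π/2)) : 0 < FF x := by
  have hm : StrictMonoOn FF (Ioc 0 x) := by
    apply strictMonoOn_of_deriv_pos (convex_Ioc 0 x)
    · intro t ht
      have htp : t ∈ Ioo (0:ℝ) π := ⟨ht.1, by linarith [ht.2, hx.2, pi_pos]⟩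
      exact (hasDerivAt_FF htp).differentiableAt.continuousAt.continuousWithinAt
    · intro t ht
      rw [interior_Ioc] at ht
      have ht2 : t ∈ Ioo (0:ℝ) (π/2) := ⟨ht.1, lt_trans ht.2 hx.2⟩
      have htp : t ∈ Ioo (0:ℝ) π := ⟨ht.1, by linarith [ht2.2, pi_pos]⟩
      have hs : 0 < sin t := sin_pos_of_pos_of_lt_pi ht.1 htp.2
      rw [(hasDerivAt_FF htp).deriv]
      exact div_pos (h_pos t ht2) (mul_pos two_pos (mul_pos ht.1 (pow_pos hs 2)))
  exact pos_of_limit hx.1 hm tendsto_FF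

private lemma GG_pi_div_two : GG (π/2) = 0 := by
  unfold GG LL AA
  norm_num [Real.sin_pi_div_two, Real.cos_pi_div_two]

private lemma GG_pos {x : ℝ} (hx : x ∈ Ioo (0:ℝ) (π/2)) : 0 < GG x := by
  rcases le_or_gt (rr x) (Real.log (π/2)) with hc | hc
  · have hanti : StrictAntiOn GG (Icc x (π/2)) := by
      apply strictAntiOn_of_deriv_neg (convex_Icc x (π/2))
      · intro t ht
        have htp : t ∈ Ioo (0:ℝ) π := ⟨lt_of_lt_of_le hx.1 ht.1, by linarith [ht.2, pi_pos]⟩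
        exact (hasDerivAt_GG htp).differentiableAt.continuousAt.continuousWithinAt
      · intro t ht
        rw [interior_Icc] at ht
        have ht2 : t ∈ Ioo (0:ℝ) (π/2) := ⟨lt_trans hx.1 ht.1, ht.2⟩
        have htp : t ∈ Ioo (0:ℝ) π := ⟨ht2.1, by linarith [ht2.2, pi_pos]⟩
        have hs : 0 < sin t := sin_pos_of_pos_of_lt_pi ht2.1 htp.2
        have hrt : rr t < rr x := rr_anti hx ht2 ht.1
        have hD := DD_pos htp
        have hNc : NN t < Real.log (π/2) * DD t := by
          have h1 : rr t < Real.log (π/2) := lt_of_lt_of_le hrt hc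
          rw [rr, div_lt_iff₀ hD] at h1
          linarith [h1]
        rw [(hasDerivAt_GG htp).deriv]
        exact div_neg_of_neg_of_pos (by linarith) (mul_pos ht2.1 (pow_pos hs 2))
    have h := hanti (left_mem_Icc.2 hx.2.le) (right_mem_Icc.2 hx.2.le) hx.2
    rwa [GG_pi_div_two] at h
  · have hm : StrictMonoOn GG (Ioc 0 x) := by
      apply strictMonoOn_of_deriv_pos (convex_Ioc 0 x)
      · intro t ht
        have htp : t ∈ Ioo (0:ℝ) π := ⟨ht.1, by linarith [ht.2, hx.2, pi_pos]⟩
        exact (hasDerivAt_GG htp).differentiableAt.continuousAt.continuousWithinAt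
      · intro t ht
        rw [interior_Ioc] at ht
        have ht2 : t ∈ Ioo (0:ℝ) (π/2) := ⟨ht.1, lt_trans ht.2 hx.2⟩
        have htp : t ∈ Ioo (0:ℝ) π := ⟨ht.1, by linarith [ht2.2, pi_pos]⟩
        have hs : 0 < sin t := sin_pos_of_pos_of_lt_pi ht.1 htp.2
        have hrt : rr x < rr t := rr_anti ht2 hx ht.2
        have hD := DD_pos htp
        have hNc : Real.log (π/2) * DD t < NN t := by
          have h1 : Real.log (π/2) < rr t := lt_trans hc hrt
          rw [rr, lt_div_iff₀ hD] at h1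
          linarith [h1]
        rw [(hasDerivAt_GG htp).deriv]
        exact div_pos (by linarith) (mul_pos ht.1 (pow_pos hs 2))
    exact pos_of_limit hx.1 hm tendsto_GG

theorem sin_div_exp_bounds (x : ℝ) (hx : x ∈ Ioo 0 (π/2)) :
    exp ((x * (cos x / sin x) - 1) / 2) < sin x / x ∧
    sin x / x < exp (log (π/2) * (x * (cos x / sin x) - 1)) := by
  have hx0 : 0 < x := hx.1
  have hs : 0 < sin x := sin_pos_of_pos_of_lt_pi hx0 (by linarith [hx.2, pi_pos])
  have hsdx : 0 < sin x / x := div_pos hs hx0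
  have hlog : Real.log (sin x / x) = -LL x := by
    rw [Real.log_div hs.ne' hx0.ne']
    unfold LL; ring
  have hF := FF_pos hx
  have hG := GG_pos hx
  unfold FF at hF
  unfold GG at hG
  unfold AA at hF hG
  constructor
  · have h1 : (x * (cos x / sin x) - 1) / 2 < Real.log (sin x / x) := by
      rw [hlog]; linarith
    calc exp ((x * (cos x / sin x) - 1) / 2) < exp (Real.log (sin x / x)) :=
          Real.exp_lt_exp.2 h1
      _ = sin x / x := Real.exp_log hsdx
  · have h1 : Real.log (sin x / x) < Real.log (π/2) * (x * (cos x / sin x) - 1) := by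
      rw [hlog]; nlinarith [hG]
    calc sin x / x = exp (Real.log (sin x / x)) := (Real.exp_log hsdx).symm
      _ < exp (log (π/2) * (x * (cos x / sin x) - 1)) := Real.exp_lt_exp.2 h1
end

section
/- For all x in (0, π/2), ((1 + cos(x))/2)^{2/3} < sin(x)/x < ((1 + cos(x))/2)^{log(π/2)/log 2}. -/
open Real Set Filter Topology

lemma sin_ge_poly (t : ℝ) (ht : 0 ≤ t) : t - t^3/6 ≤ Real.sin t := by
  have hder : ∀ s : ℝ, HasDerivAt (fun s : ℝ => Real.sin s - (s - s^3/6))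
      (Real.cos s - (1 - 3*s^2/6)) s := fun s => by
    exact ((Real.hasDerivAt_sin s).sub
      (((hasDerivAt_id' s).sub (((hasDerivAt_pow 3 s).div_const 6))))).congr_deriv (by norm_num)
  have key : MonotoneOn (fun s : ℝ => Real.sin s - (s - s^3/6)) (Ici 0) := by
    apply monotoneOn_of_deriv_nonneg (convex_Ici 0)
    · exact (Real.continuous_sin.sub (by continuity)).continuousOn
    · exact fun s _ => (hder s).differentiableAt.differentiableWithinAt
    · intro s hs
      rw [(hder s).deriv]
      have := Real.one_sub_sq_div_two_le_cos (x := s)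
      nlinarith
  have h0 : (0:ℝ) ∈ Ici (0:ℝ) := by simp
  have := key h0 (mem_Ici.2 ht) ht
  simp at this
  linarith

lemma cos_le_poly (t : ℝ) (ht : 0 ≤ t) (ht' : t ≤ 2) : Real.cos t ≤ 1 - t^2/2 + t^4/24 := by
  have h1 : Real.cos t = 1 - 2 * Real.sin (t/2)^2 := by
    have := Real.cos_sq (t/2)
    rw [show 2 * (t/2) = t by ring] at this
    have h2 := Real.sin_sq_add_cos_sq (t/2)
    linarith
  have h2 : (t/2) - (t/2)^3/6 ≤ Real.sin (t/2) := sin_ge_poly _ (by linarith)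
  have h3 : 0 ≤ (t/2) - (t/2)^3/6 := by nlinarith [sq_nonneg t]
  have h4 : ((t/2) - (t/2)^3/6)^2 ≤ Real.sin (t/2)^2 := by
    exact pow_le_pow_left₀ h3 h2 2
  rw [h1]; nlinarith [pow_nonneg ht 6]

lemma log_pi_div_two_ub : Real.log (π/2) ≤ 0.45504 := by
  have hq : (π/2 : ℝ) ≤ (1.01422:ℝ)^(32:ℕ) := by
    have := Real.pi_lt_d2
    have h2 := Real.pi_lt_d6
    nlinarith [Real.pi_lt_d6]
  have hpos : (0:ℝ) < π/2 := by positivity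
  have h1 : Real.log (π/2) ≤ Real.log ((1.01422:ℝ)^(32:ℕ)) :=
    Real.log_le_log hpos hq
  have h2 : Real.log ((1.01422:ℝ)^(32:ℕ)) = 32 * Real.log 1.01422 := by
    rw [Real.log_pow]; norm_num
  have h3 : Real.log (1.01422:ℝ) ≤ 1.01422 - 1 :=
    Real.log_le_sub_one_of_pos (by norm_num)
  rw [h2] at h1
  linarith

lemma log_pi_div_two_lb : (0.448:ℝ) ≤ Real.log (π/2) := by
  have hq : (2/π : ℝ) ≤ (0.986:ℝ)^(32:ℕ) := by
    have h := Real.pi_gt_d6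
    have hp : (0:ℝ) < π := Real.pi_pos
    rw [div_le_iff₀ hp]
    nlinarith
  have hpos : (0:ℝ) < 2/π := by positivity
  have h1 : Real.log (2/π) ≤ Real.log ((0.986:ℝ)^(32:ℕ)) := Real.log_le_log hpos hq
  have h2 : Real.log ((0.986:ℝ)^(32:ℕ)) = 32 * Real.log 0.986 := by
    rw [Real.log_pow]; norm_num
  have h3 : Real.log (0.986:ℝ) ≤ 0.986 - 1 := Real.log_le_sub_one_of_pos (by norm_num)
  have h4 : Real.log (2/π) = - Real.log (π/2) := by
    rw [← Real.log_inv]; norm_num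
  rw [h2, h4] at h1
  linarith


lemma left_ineq (x : ℝ) (hx : x ∈ Ioo 0 (π/2)) :
    ((1 + Real.cos x) / 2) ^ ((2 : ℝ)/3) < Real.sin x / x := by
  obtain ⟨hx0, hx2⟩ := hx
  set t := x/2 with htdef
  have ht0 : 0 < t := by positivity
  have ht1 : t < 1 := by
    have := Real.pi_lt_d6; simp only [htdef]; linarith
  -- basic facts
  have hcost : 0 < Real.cos t := Real.cos_pos_of_mem_Ioo
    ⟨by linarith [Real.pi_pos], by linarith [Real.pi_gt_d6]⟩
  have hsint : t - t^3/6 ≤ Real.sin t := sin_ge_poly t ht0.le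
  have hsintpos : 0 < Real.sin t := by nlinarith [mul_pos (mul_pos ht0 ht0) ht0, mul_pos ht0 ht0]
  have hcosle : Real.cos t ≤ 1 - t^2/2 + t^4/24 := cos_le_poly t ht0.le (by linarith)
  -- core: t^3 * cos t < sin t ^ 3
  have hcore : t^3 * Real.cos t < Real.sin t ^ 3 := by
    have h1 : (t - t^3/6)^3 ≤ Real.sin t ^ 3 := by
      apply pow_le_pow_left₀ (by nlinarith [mul_pos (mul_pos ht0 ht0) ht0, mul_pos ht0 ht0]) hsint
    have h9 : t^9 ≤ t^7 := pow_le_pow_of_le_one ht0.le ht1.le (by norm_num)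
    have h7 : 0 < t^7 := pow_pos ht0 7
    have h2 : t^3*(1 - t^2/2 + t^4/24) < (t - t^3/6)^3 := by nlinarith
    calc t^3 * Real.cos t ≤ t^3*(1 - t^2/2 + t^4/24) := by
          apply mul_le_mul_of_nonneg_left hcosle (by positivity)
      _ < (t - t^3/6)^3 := h2
      _ ≤ Real.sin t ^ 3 := h1
  -- translate to A² < B³
  have hA : (1 + Real.cos x)/2 = Real.cos t ^ 2 := by
    have := Real.cos_sq t
    rw [show 2 * t = x by rw [htdef]; ring] at this
    linarith
  have hB : Real.sin x / x = Real.sin t * Real.cos t / t := by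
    rw [show x = 2*t by rw [htdef]; ring, Real.sin_two_mul]
    field_simp
  have hApos : (0:ℝ) < (1 + Real.cos x)/2 := by rw [hA]; positivity
  have hBpos : (0:ℝ) < Real.sin x / x := by rw [hB]; positivity
  have hkey : ((1 + Real.cos x)/2)^(2:ℕ) < (Real.sin x / x)^(3:ℕ) := by
    rw [hA, hB]
    rw [div_pow]
    rw [lt_div_iff₀ (by positivity)]
    have : (Real.cos t ^ 2)^(2:ℕ) * t^3 = (t^3 * Real.cos t) * Real.cos t ^3 := by ring
    rw [this]
    calc t^3 * Real.cos t * Real.cos t ^ 3 < Real.sin t ^3 * Real.cos t ^3 := by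
          apply mul_lt_mul_of_pos_right hcore (by positivity)
      _ = (Real.sin t * Real.cos t)^(3:ℕ) := by ring
  -- rpow conversion
  have h23 : ((1 + Real.cos x)/2) ^ ((2:ℝ)/3) = (((1 + Real.cos x)/2)^(2:ℕ)) ^ ((1:ℝ)/3) := by
    rw [← Real.rpow_natCast ((1 + Real.cos x)/2) 2, ← Real.rpow_mul hApos.le]
    norm_num
  have hfin : (((1 + Real.cos x)/2)^(2:ℕ)) ^ ((1:ℝ)/3) < ((Real.sin x / x)^(3:ℕ)) ^ ((1:ℝ)/3) := by
    apply Real.rpow_lt_rpow (by positivity) hkey (by norm_num)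
  rw [h23]
  calc (((1 + Real.cos x)/2)^(2:ℕ)) ^ ((1:ℝ)/3) < ((Real.sin x / x)^(3:ℕ)) ^ ((1:ℝ)/3) := hfin
    _ = Real.sin x / x := by
        rw [← Real.rpow_natCast (Real.sin x / x) 3, ← Real.rpow_mul hBpos.le]
        norm_num


noncomputable def cc : ℝ := Real.log (π/2) / Real.log 2

lemma cc_ub : cc ≤ 0.6565 := by
  have h2 := Real.log_two_gt_d9
  have h1 := log_pi_div_two_ub
  rw [cc, div_le_iff₀ (by linarith)]
  nlinarith

lemma cc_lb : (0.6463:ℝ) ≤ cc := by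
  have h2 := Real.log_two_lt_d9
  have h2' := Real.log_two_gt_d9
  have h1 := log_pi_div_two_lb
  rw [cc, le_div_iff₀ (by linarith)]
  nlinarith

lemma cc_log : cc * Real.log 2 = Real.log (π/2) := by
  have h2 := Real.log_two_gt_d9
  rw [cc]; field_simp

-- the function Φ₀ and its derivative
noncomputable def Phi (x : ℝ) : ℝ := Real.sin x - x * Real.cos x - cc * (x * (1 - Real.cos x))

lemma Phi_deriv (x : ℝ) : HasDerivAt Phi ((1 - cc) * (x * Real.sin x) - cc * (1 - Real.cos x)) x := by
  have h : HasDerivAt (fun x : ℝ => Real.sin x - x * Real.cos x - cc * (x * (1 - Real.cos x)))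
      (Real.cos x - (1 * Real.cos x + x * (-Real.sin x)) -
        cc * (1 * (1 - Real.cos x) + x * (- - Real.sin x))) x := by
    apply HasDerivAt.sub
    · exact (Real.hasDerivAt_sin x).sub ((hasDerivAt_id x).mul (Real.hasDerivAt_cos x))
    · exact HasDerivAt.const_mul _ ((hasDerivAt_id x).mul
        (((Real.hasDerivAt_cos x).const_sub 1)))
  convert h using 1
  · rfl
  ring


noncomputable def KK : ℝ := 2 * (1 - cc) / cc

lemma cc_pos : (0:ℝ) < cc := lt_of_lt_of_le (by norm_num) cc_lb

lemma tan_strictConvex : StrictConvexOn ℝ (Icc 0 (π/4)) Real.tan := by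
  have hsub : Icc (0:ℝ) (π/4) ⊆ {x | Real.cos x ≠ 0} := by
    intro y hy
    have : 0 < Real.cos y := Real.cos_pos_of_mem_Ioo
      ⟨by simp only [mem_Icc] at hy; linarith [Real.pi_pos, hy.1], by
        simp only [mem_Icc] at hy; linarith [Real.pi_pos, hy.2]⟩
    exact this.ne'
  apply StrictMonoOn.strictConvexOn_of_deriv (convex_Icc _ _)
  · exact Real.continuousOn_tan.mono hsub
  · rw [interior_Icc]
    intro a ha b hb hab
    rw [Real.deriv_tan, Real.deriv_tan]
    simp only [mem_Ioo] at ha hb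
    have hpi := Real.pi_pos
    have hca : 0 < Real.cos a := Real.cos_pos_of_mem_Ioo ⟨by linarith, by linarith⟩
    have hcb : 0 < Real.cos b := Real.cos_pos_of_mem_Ioo ⟨by linarith, by linarith⟩
    have : Real.cos b < Real.cos a :=
      Real.cos_lt_cos_of_nonneg_of_le_pi (by linarith) (by linarith) hab
    rw [div_lt_div_iff₀ (by positivity) (by positivity)]
    nlinarith

lemma exists_vstar : ∃ v : ℝ, v ∈ Ioo 0.2 (π/4) ∧ Real.tan v = KK * v := by
  have hpi := Real.pi_gt_d6
  have hpi' := Real.pi_lt_d6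
  have h02 : (0.2:ℝ) < π/4 := by linarith
  have hcont : ContinuousOn (fun v => Real.tan v - KK * v) (Icc 0.2 (π/4)) := by
    apply ContinuousOn.sub
    · apply Real.continuousOn_tan.mono
      intro y hy
      simp only [mem_Icc] at hy
      have : 0 < Real.cos y := Real.cos_pos_of_mem_Ioo ⟨by linarith, by linarith⟩
      exact this.ne'
    · exact (continuous_const.mul continuous_id).continuousOn
  have hK_lb : 1.0464 ≤ KK := by
    have := cc_ub
    have := cc_pos
    rw [KK, le_div_iff₀ cc_pos]
    nlinarith
  have hK_ub : KK * (π/4) < 1 := by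
    have := cc_lb
    rw [KK, div_mul_eq_mul_div, div_lt_one cc_pos]
    nlinarith
  have hneg : Real.tan 0.2 - KK * 0.2 < 0 := by
    have hc : (0.98:ℝ) ≤ Real.cos 0.2 := by
      have := Real.one_sub_sq_div_two_le_cos (x := 0.2)
      norm_num at this ⊢; linarith
    have hs : Real.sin 0.2 < 0.2 := Real.sin_lt (by norm_num)
    have hcpos : (0:ℝ) < Real.cos 0.2 := by linarith
    have : Real.tan 0.2 < 0.2 / 0.98 := by
      rw [Real.tan_eq_sin_div_cos]
      calc Real.sin 0.2 / Real.cos 0.2 < 0.2 / Real.cos 0.2 :=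
            div_lt_div_of_pos_right hs hcpos
        _ ≤ 0.2 / 0.98 := by
            apply div_le_div_of_nonneg_left (by norm_num) (by norm_num) hc
    nlinarith
  have hposv : 0 < Real.tan (π/4) - KK * (π/4) := by
    rw [Real.tan_pi_div_four]; linarith
  have := intermediate_value_Ioo h02.le hcont (a := 0.2) (b := π/4)
  have h0mem : (0:ℝ) ∈ Ioo (Real.tan 0.2 - KK * 0.2) (Real.tan (π/4) - KK * (π/4)) :=
    ⟨hneg, hposv⟩
  obtain ⟨v, hv, hveq⟩ := this h0mem
  refine ⟨v, hv, ?_⟩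
  simp only at hveq
  linarith

-- sign of tan v - KK v on both sides of vstar
lemma tan_lt_K (v vs : ℝ) (hvs : vs ∈ Ioo 0.2 (π/4)) (heq : Real.tan vs = KK * vs)
    (hv : 0 < v) (hlt : v < vs) : Real.tan v < KK * v := by
  have hconv := tan_strictConvex
  have hpi := Real.pi_gt_d6
  obtain ⟨hvs1, hvs2⟩ := hvs
  have h0 : (0:ℝ) ∈ Icc (0:ℝ) (π/4) := by constructor <;> [norm_num; linarith]
  have hv2 : vs ∈ Icc (0:ℝ) (π/4) := by constructor <;> [linarith; linarith]
  -- v = (1 - v/vs)·0 + (v/vs)·vs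
  set l : ℝ := v / vs with hl
  have hl0 : 0 < l := by apply div_pos hv; linarith
  have hl1 : l < 1 := by rw [hl, div_lt_one (by linarith)]; exact hlt
  have := hconv.2 h0 hv2 (show (0:ℝ) ≠ vs by intro h; linarith)
    (show (0:ℝ) < 1 - l by linarith) hl0 (by ring)
  simp only [smul_eq_mul, mul_zero, zero_add, Real.tan_zero, mul_zero, zero_add] at this
  have hveq : l * vs = v := by rw [hl]; field_simp
  rw [hveq] at this
  calc Real.tan v < l * Real.tan vs := this
    _ = KK * v := by rw [heq, ← hveq]; ring

lemma tan_gt_K (v vs : ℝ) (hvs : vs ∈ Ioo 0.2 (π/4)) (heq : Real.tan vs = KK * vs)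
    (hv : vs < v) (hlt : v ≤ π/4) : KK * v < Real.tan v := by
  have hconv := tan_strictConvex
  have hpi := Real.pi_gt_d6
  obtain ⟨hvs1, hvs2⟩ := hvs
  have h0 : (0:ℝ) ∈ Icc (0:ℝ) (π/4) := by constructor <;> [norm_num; linarith]
  have hv2 : v ∈ Icc (0:ℝ) (π/4) := by constructor <;> [linarith; linarith]
  set l : ℝ := vs / v with hl
  have hvpos : 0 < v := by linarith
  have hl0 : 0 < l := by apply div_pos (by linarith) hvpos
  have hl1 : l < 1 := by rw [hl, div_lt_one hvpos]; exact hv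
  have := hconv.2 h0 hv2 (show (0:ℝ) ≠ v by intro h; linarith)
    (show (0:ℝ) < 1 - l by linarith) hl0 (by ring)
  simp only [smul_eq_mul, mul_zero, zero_add, Real.tan_zero, mul_zero, zero_add] at this
  have hveq : l * v = vs := by rw [hl]; field_simp
  rw [hveq, heq] at this
  have : KK * vs < l * Real.tan v := this
  have hlv : KK * vs = l * (KK * v) := by rw [hl]; field_simp
  rw [hlv] at this
  exact lt_of_mul_lt_mul_left this hl0.le

lemma Phi_deriv_sign (vs : ℝ) (hvs : vs ∈ Ioo 0.2 (π/4)) (heq : Real.tan vs = KK * vs) :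
    (∀ x : ℝ, 0 < x → x < 2*vs → 0 < (1 - cc) * (x * Real.sin x) - cc * (1 - Real.cos x)) ∧
    (∀ x : ℝ, 2*vs < x → x < π/2 → (1 - cc) * (x * Real.sin x) - cc * (1 - Real.cos x) < 0) := by
  have hpi := Real.pi_gt_d6
  have hpi' := Real.pi_lt_d6
  have hccK : cc * KK = 2 * (1 - cc) := by
    rw [KK]; field_simp [cc_pos.ne']
  constructor
  · intro x hx0 hx1
    set v := x/2 with hv
    have hv0 : 0 < v := by positivity
    have hvlt : v < vs := by rw [hv]; linarith
    have hvpi : v < π/4 := by obtain ⟨h1,h2⟩ := hvs; linarith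
    have hsv : 0 < Real.sin v := Real.sin_pos_of_pos_of_lt_pi hv0 (by linarith)
    have hcv : 0 < Real.cos v := Real.cos_pos_of_mem_Ioo ⟨by linarith, by linarith⟩
    have htan := tan_lt_K v vs hvs heq hv0 hvlt
    rw [Real.tan_eq_sin_div_cos, div_lt_iff₀ hcv] at htan
    have hsinx : Real.sin x = 2 * Real.sin v * Real.cos v := by
      rw [show x = 2*v by rw [hv]; ring, Real.sin_two_mul]
    have hcosx : 1 - Real.cos x = 2 * Real.sin v ^ 2 := by
      rw [show x = 2*v by rw [hv]; ring, Real.cos_two_mul]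
      have := Real.sin_sq_add_cos_sq v
      nlinarith
    rw [hsinx, hcosx, show x = 2*v by rw [hv]; ring]
    have hcc1 : cc < 1 := by linarith [cc_ub]
    -- key: cc * sin v < cc * (KK * v) * cos v = 2(1-cc) v cos v
    have h1 : cc * Real.sin v < 2 * (1 - cc) * (v * Real.cos v) := by
      have := mul_lt_mul_of_pos_left htan cc_pos
      calc cc * Real.sin v < cc * (KK * v * Real.cos v) := this
        _ = 2 * (1 - cc) * (v * Real.cos v) := by
            have h2 : cc * (KK * v * Real.cos v) = (cc * KK) * (v * Real.cos v) := by ring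
            rw [h2, hccK]
    nlinarith
  · intro x hx1 hx2
    set v := x/2 with hv
    obtain ⟨hvs1, hvs2⟩ := hvs
    have hv0 : 0 < v := by rw [hv]; linarith
    have hvgt : vs < v := by rw [hv]; linarith
    have hvpi : v < π/4 := by rw [hv]; linarith
    have hsv : 0 < Real.sin v := Real.sin_pos_of_pos_of_lt_pi hv0 (by linarith)
    have hcv : 0 < Real.cos v := Real.cos_pos_of_mem_Ioo ⟨by linarith, by linarith⟩
    have htan := tan_gt_K v vs ⟨hvs1, hvs2⟩ heq hvgt hvpi.le
    rw [Real.tan_eq_sin_div_cos, lt_div_iff₀ hcv] at htan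
    have hsinx : Real.sin x = 2 * Real.sin v * Real.cos v := by
      rw [show x = 2*v by rw [hv]; ring, Real.sin_two_mul]
    have hcosx : 1 - Real.cos x = 2 * Real.sin v ^ 2 := by
      rw [show x = 2*v by rw [hv]; ring, Real.cos_two_mul]
      have := Real.sin_sq_add_cos_sq v
      nlinarith
    rw [hsinx, hcosx, show x = 2*v by rw [hv]; ring]
    have h1 : 2 * (1 - cc) * (v * Real.cos v) < cc * Real.sin v := by
      have := mul_lt_mul_of_pos_left htan cc_pos
      calc 2 * (1 - cc) * (v * Real.cos v) = cc * (KK * v * Real.cos v) := by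
            have h3 : cc * (KK * v * Real.cos v) = (cc * KK) * (v * Real.cos v) := by ring
            rw [h3, hccK]
        _ < cc * Real.sin v := this
    nlinarith

lemma Phi_continuous : Continuous Phi := by
  unfold Phi
  continuity

lemma exists_x0 : ∃ x0 : ℝ, x0 ∈ Ioo 0 (π/2) ∧
    (∀ x ∈ Ioo (0:ℝ) x0, 0 < Phi x) ∧ (∀ x ∈ Ioo x0 (π/2), Phi x < 0) := by
  obtain ⟨vs, hvs, heq⟩ := exists_vstar
  obtain ⟨hpos, hneg⟩ := Phi_deriv_sign vs hvs heq
  have hpi := Real.pi_gt_d6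
  have hpi' := Real.pi_lt_d6
  obtain ⟨hvs1, hvs2⟩ := hvs
  set xs := 2 * vs with hxs
  have hxs0 : 0 < xs := by rw [hxs]; linarith
  have hxspi : xs < π/2 := by rw [hxs]; linarith
  -- Phi strictly monotone on [0, xs]
  have hmono : StrictMonoOn Phi (Icc 0 xs) := by
    apply strictMonoOn_of_deriv_pos (convex_Icc _ _) Phi_continuous.continuousOn
    intro x hx
    rw [interior_Icc, mem_Ioo] at hx
    rw [(Phi_deriv x).deriv]
    exact hpos x hx.1 hx.2
  have hanti : StrictAntiOn Phi (Icc xs (π/2)) := by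
    apply strictAntiOn_of_deriv_neg (convex_Icc _ _) Phi_continuous.continuousOn
    intro x hx
    rw [interior_Icc, mem_Ioo] at hx
    rw [(Phi_deriv x).deriv]
    exact hneg x hx.1 hx.2
  have hPhi0 : Phi 0 = 0 := by simp [Phi]
  have hPhixs : 0 < Phi xs := by
    have := hmono (left_mem_Icc.2 (by linarith)) ⟨hxs0.le, le_refl _⟩ hxs0
    rwa [hPhi0] at this
  have hPhipi : Phi (π/2) < 0 := by
    have hcb := cc_lb
    simp only [Phi, Real.sin_pi_div_two, Real.cos_pi_div_two]
    nlinarith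
  -- IVT on [xs, π/2]
  have hivt := intermediate_value_Ioo' (le_of_lt hxspi) Phi_continuous.continuousOn
    (a := xs) (b := π/2)
  have h0mem : (0:ℝ) ∈ Ioo (Phi (π/2)) (Phi xs) := ⟨hPhipi, hPhixs⟩
  obtain ⟨x0, hx0mem, hx0eq⟩ := hivt h0mem
  obtain ⟨hx01, hx02⟩ := hx0mem
  refine ⟨x0, ⟨by linarith, hx02⟩, ?_, ?_⟩
  · intro x hx
    obtain ⟨hx1, hx2⟩ := hx
    rcases le_or_gt x xs with h | h
    · have := hmono (left_mem_Icc.2 (by linarith)) ⟨hx1.le, h⟩ hx1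
      rwa [hPhi0] at this
    · have := hanti ⟨h.le, by linarith⟩ ⟨hx01.le, hx02.le⟩ hx2
      rwa [hx0eq] at this
  · intro x hx
    obtain ⟨hx1, hx2⟩ := hx
    have := hanti ⟨hx01.le, hx02.le⟩ ⟨by linarith, hx2.le⟩ hx1
    rwa [hx0eq] at this

noncomputable def HH (x : ℝ) : ℝ :=
  cc * Real.log ((1 + Real.cos x)/2) + Real.log x - Real.log (Real.sin x)

lemma HH_deriv (x : ℝ) (hx0 : 0 < x) (hx2 : x ≤ π/2) :
    HasDerivAt HH (Phi x / (x * Real.sin x)) x := by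
  have hpi := Real.pi_pos
  have hsin : 0 < Real.sin x := Real.sin_pos_of_pos_of_lt_pi hx0 (by linarith)
  have hcos : 0 ≤ Real.cos x := Real.cos_nonneg_of_mem_Icc ⟨by linarith, hx2⟩
  have hA : (0:ℝ) < (1 + Real.cos x)/2 := by linarith
  have h1 : HasDerivAt (fun y : ℝ => (1 + Real.cos y)/2) (-Real.sin x/2) x := by
    simpa using ((Real.hasDerivAt_cos x).const_add 1).div_const 2
  have h2 : HasDerivAt (fun y : ℝ => Real.log ((1 + Real.cos y)/2))
      ((-Real.sin x/2) / ((1 + Real.cos x)/2)) x := h1.log hA.ne'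
  have h3 : HasDerivAt (fun y : ℝ => Real.log (Real.sin y))
      (Real.cos x / Real.sin x) x := (Real.hasDerivAt_sin x).log hsin.ne'
  have h4 : HasDerivAt HH
      (cc * ((-Real.sin x/2) / ((1 + Real.cos x)/2)) + x⁻¹ - Real.cos x / Real.sin x) x := by
    unfold HH
    exact ((h2.const_mul cc).add (Real.hasDerivAt_log hx0.ne')).sub h3
  convert h4 using 1
  have hs2 : Real.sin x ^ 2 = 1 - Real.cos x ^ 2 := by
    have := Real.sin_sq_add_cos_sq x; linarith
  rw [Phi]
  field_simp
  linear_combination (x*cc) * hs2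

lemma HH_pi_div_two : HH (π/2) = 0 := by
  unfold HH
  rw [Real.cos_pi_div_two, Real.sin_pi_div_two, Real.log_one]
  have h1 : ((1 + 0)/2 : ℝ) = 2⁻¹ := by norm_num
  rw [h1, Real.log_inv]
  have := cc_log
  linarith

lemma HH_tendsto : Tendsto HH (𝓝[>] (0:ℝ)) (𝓝 0) := by
  have h1 : Tendsto (fun x : ℝ => cc * Real.log ((1 + Real.cos x)/2)) (𝓝[>] (0:ℝ)) (𝓝 0) := by
    have : ContinuousAt (fun x : ℝ => cc * Real.log ((1 + Real.cos x)/2)) 0 := by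
      apply ContinuousAt.mul continuousAt_const
      apply ContinuousAt.log
      · exact (continuous_const.add Real.continuous_cos).continuousAt.div_const 2
      · simp
    have ht : Tendsto (fun x : ℝ => cc * Real.log ((1 + Real.cos x)/2)) (𝓝 (0:ℝ))
        (𝓝 (cc * Real.log ((1 + Real.cos 0)/2))) := this.tendsto
    simp only [Real.cos_zero] at ht
    norm_num at ht
    exact ht.mono_left nhdsWithin_le_nhds
  have h2 : Tendsto (fun x : ℝ => Real.log (Real.sin x) - Real.log x) (𝓝[>] (0:ℝ)) (𝓝 0) := by
    have hslope : Tendsto (fun x : ℝ => Real.sin x / x) (𝓝[>] (0:ℝ)) (𝓝 1) := by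
      have hd := Real.hasDerivAt_sin 0
      rw [hasDerivAt_iff_tendsto_slope] at hd
      have : Tendsto (slope Real.sin 0) (𝓝[>] (0:ℝ)) (𝓝 (Real.cos 0)) :=
        hd.mono_left (nhdsWithin_mono 0 (fun y hy => by
          simp only [mem_setOf_eq, mem_compl_iff, mem_singleton_iff]
          exact ne_of_gt hy))
      rw [Real.cos_zero] at this
      apply this.congr'
      filter_upwards [self_mem_nhdsWithin] with y hy
      simp [slope_def_field, hy]
    have hlog : Tendsto (fun x : ℝ => Real.log (Real.sin x / x)) (𝓝[>] (0:ℝ)) (𝓝 0) := by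
      have : ContinuousAt Real.log 1 := Real.continuousAt_log (by norm_num)
      have := this.tendsto.comp hslope
      rwa [Real.log_one] at this
    apply hlog.congr'
    filter_upwards [Ioo_mem_nhdsGT_of_mem (by norm_num : (0:ℝ) ∈ Ico (0:ℝ) 1)] with y hy
    obtain ⟨hy0, hy1⟩ := hy
    have hsy : 0 < Real.sin y := Real.sin_pos_of_pos_of_lt_pi hy0 (by linarith [Real.pi_gt_d6])
    rw [Real.log_div hsy.ne' hy0.ne']
  have := h1.add (h2.neg)
  simp only [neg_sub] at this
  norm_num at this
  apply this.congr
  intro y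
  unfold HH
  ring

lemma HH_continuousOn : ContinuousOn HH (Ioc 0 (π/2)) := by
  have hpi := Real.pi_pos
  apply ContinuousOn.sub
  · apply ContinuousOn.add
    · apply ContinuousOn.mul continuousOn_const
      apply ContinuousOn.log
      · exact ((continuous_const.add Real.continuous_cos).div_const 2).continuousOn
      · intro y hy
        obtain ⟨hy1, hy2⟩ := hy
        have : 0 ≤ Real.cos y := Real.cos_nonneg_of_mem_Icc ⟨by linarith, hy2⟩
        positivity
    · exact Real.continuousOn_log.mono (fun y hy => by simp [ne_of_gt hy.1])
  · apply ContinuousOn.log Real.continuous_sin.continuousOn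
    intro y hy
    exact (Real.sin_pos_of_pos_of_lt_pi hy.1 (by linarith [hy.2])).ne'

lemma HH_pos (x : ℝ) (hx : x ∈ Ioo 0 (π/2)) : 0 < HH x := by
  have hpi := Real.pi_pos
  obtain ⟨hx1, hx2⟩ := hx
  obtain ⟨x0, ⟨hx01, hx02⟩, hPpos, hPneg⟩ := exists_x0
  have hmono : StrictMonoOn HH (Ioc 0 x0) := by
    apply strictMonoOn_of_deriv_pos (convex_Ioc _ _)
      (HH_continuousOn.mono (Ioc_subset_Ioc le_rfl hx02.le))
    intro y hy
    rw [interior_Ioc, mem_Ioo] at hy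
    rw [(HH_deriv y hy.1 (by linarith [hy.2])).deriv]
    apply div_pos (hPpos y ⟨hy.1, hy.2⟩)
    exact mul_pos hy.1 (Real.sin_pos_of_pos_of_lt_pi hy.1 (by linarith [hy.2]))
  have hanti : StrictAntiOn HH (Icc x0 (π/2)) := by
    apply strictAntiOn_of_deriv_neg (convex_Icc _ _)
      (HH_continuousOn.mono (fun y hy => ⟨by linarith [hy.1], hy.2⟩))
    intro y hy
    rw [interior_Icc, mem_Ioo] at hy
    rw [(HH_deriv y (by linarith [hy.1]) (by linarith [hy.2])).deriv]
    apply div_neg_of_neg_of_pos (hPneg y ⟨hy.1, hy.2⟩)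
    exact mul_pos (by linarith [hy.1]) (Real.sin_pos_of_pos_of_lt_pi (by linarith [hy.1])
      (by linarith [hy.2]))
  have hnonneg : ∀ y, y ∈ Ioc (0:ℝ) x0 → 0 ≤ HH y := by
    intro y hy
    apply le_of_tendsto HH_tendsto
    filter_upwards [Ioo_mem_nhdsGT_of_mem (show (0:ℝ) ∈ Ico (0:ℝ) y from ⟨le_rfl, hy.1⟩)]
      with z hz
    exact (hmono ⟨hz.1, by linarith [hz.2, hy.2]⟩ hy hz.2).le
  rcases le_or_gt x x0 with h | h
  · have h1 : (0:ℝ) ≤ HH (x/2) := hnonneg _ ⟨by linarith, by linarith⟩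
    have h2 : HH (x/2) < HH x := hmono ⟨by linarith, by linarith⟩ ⟨hx1, h⟩ (by linarith)
    linarith
  · have := hanti ⟨h.le, hx2.le⟩ ⟨hx02.le, le_rfl⟩ hx2
    rw [HH_pi_div_two] at this
    linarith

lemma right_ineq (x : ℝ) (hx : x ∈ Ioo 0 (π/2)) :
    Real.sin x / x < ((1 + Real.cos x) / 2) ^ (Real.log (π/2) / Real.log 2) := by
  have hpi := Real.pi_pos
  obtain ⟨hx1, hx2⟩ := hx
  have hH := HH_pos x ⟨hx1, hx2⟩
  have hsin : 0 < Real.sin x := Real.sin_pos_of_pos_of_lt_pi hx1 (by linarith)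
  have hcos : 0 < Real.cos x := Real.cos_pos_of_mem_Ioo ⟨by linarith, hx2⟩
  have hA : (0:ℝ) < (1 + Real.cos x)/2 := by linarith
  have hlog : Real.log (Real.sin x / x) < cc * Real.log ((1 + Real.cos x)/2) := by
    rw [Real.log_div hsin.ne' hx1.ne']
    unfold HH at hH
    linarith
  have hrpow : ((1 + Real.cos x) / 2) ^ cc = Real.exp (cc * Real.log ((1 + Real.cos x)/2)) := by
    rw [Real.rpow_def_of_pos hA]; ring_nf
  have : Real.sin x / x = Real.exp (Real.log (Real.sin x / x)) :=
    (Real.exp_log (by positivity)).symm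
  rw [show Real.log (π/2) / Real.log 2 = cc from rfl, this, hrpow]
  exact Real.exp_lt_exp.2 hlog


theorem sin_div_pow_bounds (x : ℝ) (hx : x ∈ Ioo 0 (π/2)) :
    ((1 + cos x) / 2) ^ ((2 : ℝ)/3) < sin x / x ∧
    sin x / x < ((1 + cos x) / 2) ^ (log (π/2) / log 2) := by
  exact ⟨left_ineq x hx, right_ineq x hx⟩
end
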